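/- Let d ≥ 2, p_c(d) < p ≤ q and x ∈ ℤ^d. Under the two-stage coupling, let γ be a (deterministically chosen) geodesic from 0 to x in 𝒞_q on the event that 0 and x belong to 𝒞_q, and let γ_c be the set of p-closed edges of γ. Then for every δ > 0, ℙ( |γ_c| ≥ |γ| ((q−p)/q + δ) ) ≤ exp(−2δ²‖x‖₁). -/

import Mathlib

open MeasureTheory Filter Topology
open scoped ENNReal

namespace Perco

/-- Vertices of the hypercubic lattice `ℤ^d`. -/
abbrev V (d : ℕ) := Fin d → ℤ

/-- The `ℓ¹` distance on `ℤ^d`. -/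
def dist1 {d : ℕ} (x y : V d) : ℕ := ∑ i, (x i - y i).natAbs

/-- The `ℓ¹` norm, as a real number. -/
def norm1 {d : ℕ} (x : V d) : ℝ := (dist1 x 0 : ℝ)

/-- The `ℓ¹` distance, descended to unordered pairs. -/
def sym2dist1 {d : ℕ} : Sym2 (V d) → ℕ :=
  Sym2.lift ⟨fun x y => dist1 x y, fun x y => by
    unfold dist1
    exact Finset.sum_congr rfl fun i _ => by rw [← Int.natAbs_neg, neg_sub]⟩

/-- Edges of the lattice `(ℤ^d, 𝔼^d)`: unordered pairs of nearest neighbours. -/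
def Edge (d : ℕ) : Type := {e : Sym2 (V d) // sym2dist1 e = 1}

/-- A bond percolation configuration: every edge is open (`true`) or closed (`false`). -/
abbrev Config (d : ℕ) := Edge d → Bool

/-- The unordered pair `e` is an open edge of the configuration `ω`. -/
def openE {d : ℕ} (ω : Config d) (e : Sym2 (V d)) : Prop :=
  ∃ h : sym2dist1 e = 1, ω ⟨e, h⟩ = true

/-- `⟨x, y⟩` is an open edge of the configuration `ω`. -/
def edgeOpen {d : ℕ} (ω : Config d) (x y : V d) : Prop := openE ω s(x, y)

/-- `f 0, f 1, …, f n` is an `ω`-open path (with `n` edges). -/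
def IsOpenPath {d : ℕ} (ω : Config d) (n : ℕ) (f : ℕ → V d) : Prop :=
  ∀ i < n, edgeOpen ω (f i) (f (i + 1))

/-- `f 0, …, f n` is a (not necessarily open) lattice path of `ℤ^d`. -/
def IsLatticePath {d : ℕ} (n : ℕ) (f : ℕ → V d) : Prop :=
  ∀ i < n, dist1 (f i) (f (i + 1)) = 1

/-- The chemical distance between `x` and `y` in the configuration `ω`:
the minimal number of edges of an `ω`-open path from `x` to `y` (`⊤` if there is none). -/
noncomputable def chemDist {d : ℕ} (ω : Config d) (x y : V d) : ℝ≥0∞ :=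
  sInf {r : ℝ≥0∞ | ∃ (n : ℕ) (f : ℕ → V d),
    IsOpenPath ω n f ∧ f 0 = x ∧ f n = y ∧ r = (n : ℝ≥0∞)}

/-- `x` and `y` are connected by an `ω`-open path. -/
def Connected {d : ℕ} (ω : Config d) (x y : V d) : Prop := chemDist ω x y ≠ ⊤

/-- The open cluster of the vertex `x`. -/
def cluster {d : ℕ} (ω : Config d) (x : V d) : Set (V d) := {y | Connected ω x y}

/-- `x` lies in an infinite open cluster. -/
def InInfiniteCluster {d : ℕ} (ω : Config d) (x : V d) : Prop := (cluster ω x).Infinite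

open Classical in
/-- The regularized point `x̃`: a point of the infinite cluster minimizing the `ℓ¹`
distance to `x` (with a deterministic rule to break ties); `x` itself if there is none. -/
noncomputable def regPoint {d : ℕ} (ω : Config d) (x : V d) : V d :=
  if h : ∃ y : V d, InInfiniteCluster ω y ∧
      ∀ z : V d, InInfiniteCluster ω z → dist1 x y ≤ dist1 x z
  then h.choose else x

/-- Real-valued chemical distance (in the configuration `ωdist`) between the
regularizations (w.r.t. the configuration `ωreg`) of `x` and `y`. -/
noncomputable def DReg {d : ℕ} (ωdist ωreg : Config d) (x y : V d) : ℝ :=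
  (chemDist ωdist (regPoint ωreg x) (regPoint ωreg y)).toReal

open Classical in
/-- The number of elements of a set, as an element of `ℝ≥0∞` (`⊤` for infinite sets). -/
noncomputable def eSize {α : Type*} (A : Set α) : ℝ≥0∞ :=
  if h : A.Finite then (h.toFinset.card : ℝ≥0∞) else ⊤

/-!  ### Boxes and renormalization  -/

/-- The box of "radius" `R` centered at `c`: `∏ₖ [c k - R, c k + R)`. -/
def boxC {d : ℕ} (c : V d) (R : ℕ) : Set (V d) :=
  {x | ∀ k, c k - (R : ℤ) ≤ x k ∧ x k < c k + (R : ℤ)}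

/-- The center `i(2N+1)` of the `N`-box of macroscopic index `i`. -/
def center {d : ℕ} (N : ℕ) (i : V d) : V d := fun k => i k * (2 * (N : ℤ) + 1)

/-- The `N`-box `B_N(i) = i(2N+1) + [-N, N)^d`. -/
def macroBox {d : ℕ} (N : ℕ) (i : V d) : Set (V d) := boxC (center N i) N

/-- The enlarged box `B'_N(i) = i(2N+1) + [-3N, 3N)^d`. -/
def macroBox' {d : ℕ} (N : ℕ) (i : V d) : Set (V d) := boxC (center N i) (3 * N)

/-- An open path all of whose vertices stay in the set `S`. -/
def IsOpenPathIn {d : ℕ} (ω : Config d) (S : Set (V d)) (n : ℕ) (f : ℕ → V d) : Prop :=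
  IsOpenPath ω n f ∧ ∀ i ≤ n, f i ∈ S

/-- `x` and `y` are connected by an open path inside `S`. -/
def ConnectedIn {d : ℕ} (ω : Config d) (S : Set (V d)) (x y : V d) : Prop :=
  ∃ (n : ℕ) (f : ℕ → V d), IsOpenPathIn ω S n f ∧ f 0 = x ∧ f n = y

/-- The open cluster of `x` inside the set `S`. -/
def clusterIn {d : ℕ} (ω : Config d) (S : Set (V d)) (x : V d) : Set (V d) :=
  {y | ConnectedIn ω S x y}

/-- `C` is an open cluster of the region `S`. -/
def IsClusterIn {d : ℕ} (ω : Config d) (S : Set (V d)) (C : Set (V d)) : Prop :=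
  ∃ x ∈ S, C = clusterIn ω S x

/-- The cluster `C` has diameter at least `m`. -/
def diamGE {d : ℕ} (C : Set (V d)) (m : ℕ) : Prop :=
  ∃ x ∈ C, ∃ y ∈ C, ∃ k, (m : ℤ) ≤ |x k - y k|

/-- The cluster `C` is crossing for the box `boxC c R`: for each of the `d` directions,
`C ∩ boxC c R` contains an open path connecting the two opposite faces of the box. -/
def CrossingFor {d : ℕ} (ω : Config d) (C : Set (V d)) (c : V d) (R : ℕ) : Prop :=
  ∀ k : Fin d, ∃ (n : ℕ) (f : ℕ → V d), IsOpenPath ω n f ∧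
    (∀ m ≤ n, f m ∈ C ∩ boxC c R) ∧ f 0 k = c k - (R : ℤ) ∧ f n k = c k + (R : ℤ) - 1

/-- The `N`-box `B_N(i)` is good (for the configuration `ω`, with parameter `β`):
(i) there is a unique open cluster `C` of `B'_N(i)` of diameter at least `N`;
(ii) `C` is crossing for each of the `3^d` `N`-boxes included in `B'_N(i)`;
(iii) any two points of `C ∩ B'_N(i)` are at chemical distance at most `12βN`. -/
def IsGoodBox {d : ℕ} (ω : Config d) (N : ℕ) (β : ℝ) (i : V d) : Prop :=
  ∃ C : Set (V d),
    IsClusterIn ω (macroBox' N i) C ∧ diamGE C N ∧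
    (∀ C', IsClusterIn ω (macroBox' N i) C' → diamGE C' N → C' = C) ∧
    (∀ j : V d, (∀ k, |j k - i k| ≤ 1) → CrossingFor ω C (center N j) N) ∧
    (∀ x ∈ macroBox' N i, ∀ y ∈ macroBox' N i, x ∈ C → y ∈ C →
      chemDist ω x y ≤ ENNReal.ofReal (12 * β * N))

/-- `x` belongs to the crossing cluster of the good box `B_N(j)`, i.e. to a cluster of
`B'_N(j)` of diameter at least `N`. -/
def InCrossingCluster {d : ℕ} (ω : Config d) (N : ℕ) (j : V d) (x : V d) : Prop :=
  ∃ C : Set (V d), IsClusterIn ω (macroBox' N j) C ∧ diamGE C N ∧ x ∈ C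

/-!  ### Macroscopic site percolation -/

/-- A nearest-neighbour path of macroscopic sites staying in `S`. -/
def IsSitePathIn {d : ℕ} (S : Set (V d)) (n : ℕ) (f : ℕ → V d) : Prop :=
  (∀ m ≤ n, f m ∈ S) ∧ ∀ m < n, dist1 (f m) (f (m + 1)) = 1

/-- The sites `i` and `j` are connected by a nearest-neighbour path inside `S`. -/
def SiteConnectedIn {d : ℕ} (S : Set (V d)) (i j : V d) : Prop :=
  ∃ (n : ℕ) (f : ℕ → V d), IsSitePathIn S n f ∧ f 0 = i ∧ f n = j

/-- A `*`-path of macroscopic sites staying in `S` (consecutive sites are `*`-neighbours: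
their `ℓ^∞` distance is `1`). -/
def IsStarPathIn {d : ℕ} (S : Set (V d)) (n : ℕ) (f : ℕ → V d) : Prop :=
  (∀ m ≤ n, f m ∈ S) ∧ ∀ m < n, f m ≠ f (m + 1) ∧ ∀ k, |f (m + 1) k - f m k| ≤ 1

/-- The set of good macroscopic sites. -/
def goodSites {d : ℕ} (ω : Config d) (N : ℕ) (β : ℝ) : Set (V d) :=
  {i | IsGoodBox ω N β i}

/-- The macroscopic site `i` belongs to an infinite cluster of good boxes. -/
def InInfiniteGoodCluster {d : ℕ} (ω : Config d) (N : ℕ) (β : ℝ) (i : V d) : Prop :=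
  IsGoodBox ω N β i ∧ {j | SiteConnectedIn (goodSites ω N β) i j}.Infinite

/-- The union of the bad connected components (of the macroscopic site percolation)
meeting the set `Γ`; its size is `Σ_{C ∈ Bad, C ∩ Γ ≠ ∅} |C|`. -/
def badTouching {d : ℕ} (ω : Config d) (N : ℕ) (β : ℝ) (Γ : Set (V d)) : Set (V d) :=
  {j | ∃ i ∈ Γ, i ∉ goodSites ω N β ∧ SiteConnectedIn {k | k ∉ goodSites ω N β} i j}

/-!  ### Edges and sites of a path -/

/-- The set of edges of the path `f 0, …, f n`. -/
def pathEdges {d : ℕ} (n : ℕ) (f : ℕ → V d) : Set (Sym2 (V d)) :=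
  {e | ∃ i < n, e = s(f i, f (i + 1))}

/-- The set of vertices of the path `f 0, …, f n`. -/
def pathVerts {d : ℕ} (n : ℕ) (f : ℕ → V d) : Set (V d) :=
  {v | ∃ i ≤ n, f i = v}

/-- The set of `ω`-closed edges of the path `f 0, …, f n`. -/
def closedEdges {d : ℕ} (ω : Config d) (n : ℕ) (f : ℕ → V d) : Set (Sym2 (V d)) :=
  {e | e ∈ pathEdges n f ∧ ¬ openE ω e}

/-- The set `Γ` of macroscopic sites whose `N`-box is visited by the path `f 0, …, f n`. -/
def visitedSites {d : ℕ} (N : ℕ) (n : ℕ) (f : ℕ → V d) : Set (V d) :=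
  {i | ∃ m ≤ n, f m ∈ macroBox N i}

/-!  ### Probability: i.i.d. Bernoulli bond percolation -/

/-- A family of i.i.d. Bernoulli bond percolation measures on the configurations:
`P p` is a probability measure under which the states of the edges are independent
Bernoulli variables of parameter `p`. -/
structure BernoulliFamily (d : ℕ) where
  P : ℝ → Measure (Config d)
  prob : ∀ p, IsProbabilityMeasure (P p)
  iid : ∀ p, 0 ≤ p → p ≤ 1 → ∀ (s : Finset (Edge d)) (f : Edge d → Bool),
    P p {ω : Config d | ∀ e ∈ s, ω e = f e}
      = ∏ e ∈ s, ENNReal.ofReal (if f e then p else 1 - p)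

/-- The critical parameter `p_c(d)` of the family. -/
noncomputable def pc {d : ℕ} (F : BernoulliFamily d) : ℝ :=
  sInf {p : ℝ | 0 ≤ p ∧ p ≤ 1 ∧ 0 < F.P p {ω : Config d | InInfiniteCluster ω 0}}

/-- `t` is the time constant of the percolation measure `P`: for every `x ∈ ℤ^d`,
`D^{𝒞}(0̃, ñx)/n → t x` almost surely. -/
def ASTimeConstant {d : ℕ} (P : Measure (Config d)) (t : V d → ℝ) : Prop :=
  ∀ x : V d, ∀ᵐ ω ∂P, Tendsto (fun n : ℕ => DReg ω ω 0 (n • x) / n) atTop (𝓝 (t x))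

/-!  ### Couplings -/

/-- Two-stage coupling configurations: each edge carries a pair `(V, Z)` of Booleans. -/
abbrev CConfig (d : ℕ) := Edge d → Bool × Bool

/-- The `q`-configuration of a coupled configuration: `e` is `q`-open iff `V e = 1`. -/
def cfgQ {d : ℕ} (u : CConfig d) : Config d := fun e => (u e).1

/-- The `p`-configuration of a coupled configuration: `e` is `p`-open iff `V e Z e = 1`. -/
def cfgP {d : ℕ} (u : CConfig d) : Config d := fun e => (u e).1 && (u e).2

/-- Two-stage coupling of the `p`- and `q`-percolations: on each edge, independently,
`V` is Bernoulli of parameter `q` and `Z` is an independent Bernoulli of parameter `p/q`. -/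
structure CouplingMeasure (d : ℕ) (p q : ℝ) where
  Q : Measure (CConfig d)
  prob : IsProbabilityMeasure Q
  iid : ∀ (s : Finset (Edge d)) (f : Edge d → Bool × Bool),
    Q {u : CConfig d | ∀ e ∈ s, u e = f e}
      = ∏ e ∈ s,
          (ENNReal.ofReal (if (f e).1 then q else 1 - q) *
            ENNReal.ofReal (if (f e).2 then p / q else 1 - p / q))

/-- Standard coupling: i.i.d. uniform variables on `[0,1]`, one for each edge. -/
structure UniformCoupling (d : ℕ) where
  Q : Measure (Edge d → ℝ)
  prob : IsProbabilityMeasure Q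
  iid : ∀ (s : Finset (Edge d)) (a : Edge d → ℝ), (∀ e ∈ s, 0 ≤ a e ∧ a e ≤ 1) →
    Q {u | ∀ e ∈ s, u e ≤ a e} = ∏ e ∈ s, ENNReal.ofReal (a e)

open Classical in
/-- The `p`-configuration of the standard coupling: `e` is `p`-open iff `U e ≤ p`. -/
noncomputable def cfgAt {d : ℕ} (u : Edge d → ℝ) (p : ℝ) : Config d :=
  fun e => if u e ≤ p then true else false

/-- The critical parameter `p_c(d)` read on the standard coupling. -/
noncomputable def pcU {d : ℕ} (U : UniformCoupling d) : ℝ :=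
  sInf {p : ℝ | 0 ≤ p ∧ p ≤ 1 ∧ 0 < U.Q {u | InInfiniteCluster (cfgAt u p) 0}}

open Classical in
/-- A deterministically chosen geodesic (open path of minimal length) from `x` to `y`
in the configuration `ω` (a trivial constant path if there is none). -/
noncomputable def geod {d : ℕ} (ω : Config d) (x y : V d) : ℕ × (ℕ → V d) :=
  if h : ∃ nf : ℕ × (ℕ → V d), IsOpenPath ω nf.1 nf.2 ∧ nf.2 0 = x ∧ nf.2 nf.1 = y ∧
      (nf.1 : ℝ≥0∞) = chemDist ω x y
  then h.choose else (0, fun _ => x)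

/-!  ### Norms on `ℝ^d` -/

/-- `f` is a norm on the Euclidean space `ℝ^d`. -/
def IsNorm {d : ℕ} (f : EuclideanSpace ℝ (Fin d) → ℝ) : Prop :=
  (∀ x, 0 ≤ f x) ∧ (∀ x, f x = 0 ↔ x = 0) ∧
  (∀ (c : ℝ) (x), f (c • x) = |c| * f x) ∧ ∀ x y, f (x + y) ≤ f x + f y

/-- The canonical embedding of `ℤ^d` into the Euclidean space `ℝ^d`. -/
noncomputable def toEuc {d : ℕ} (x : V d) : EuclideanSpace ℝ (Fin d) :=
  (WithLp.equiv 2 (Fin d → ℝ)).symm fun i => (x i : ℝ)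

/-- Property (1) of the path-modification lemma: the edges of `γ' \ γ` decompose as a
disjoint union of self-avoiding `p`-open paths intersecting `γ' ∩ γ` at their endpoints. -/
def DisjointPathDecomposition {d : ℕ} (ωp : Config d) (n : ℕ) (f : ℕ → V d)
    (n' : ℕ) (g : ℕ → V d) : Prop :=
  ∃ (K : ℕ) (m : ℕ → ℕ) (h : ℕ → ℕ → V d),
    (⋃ j ∈ Finset.range K, pathEdges (m j) (h j)) = pathEdges n' g \ pathEdges n f ∧
    (∀ j < K, IsOpenPath ωp (m j) (h j)) ∧
    (∀ j < K, ∀ a ≤ m j, ∀ b ≤ m j, h j a = h j b → a = b) ∧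
    (∀ j < K, ∀ l < K, j ≠ l → Disjoint (pathEdges (m j) (h j)) (pathEdges (m l) (h l))) ∧
    (∀ j < K, h j 0 ∈ pathVerts n f ∧ h j (m j) ∈ pathVerts n f) ∧
    (∀ j < K, ∀ a, 0 < a → a < m j → h j a ∉ pathVerts n f)

/-- The conclusion of the path-modification lemma, for the constant `ρ`:
any `q`-open path between well-connected points of `𝒞_p` can be turned into a `p`-open
path, the total length of the bypasses being controlled by the bad clusters met and the
number of `p`-closed edges. -/
def BypassProperty (d : ℕ) (ρ : ℕ) : Prop :=
  ∀ (N : ℕ), 1 ≤ N → ∀ (β : ℝ), 1 ≤ β → ∀ (ωp ωq : Config d),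
    (∀ e, ωp e = true → ωq e = true) →
    ∀ y z : V d, InInfiniteCluster ωp y → InInfiniteCluster ωp z →
    (∃ i, y ∈ macroBox N i ∧ InInfiniteGoodCluster ωp N β i) →
    (∃ i, z ∈ macroBox N i ∧ InInfiniteGoodCluster ωp N β i) →
    ∀ (n : ℕ) (f : ℕ → V d), IsOpenPath ωq n f → f 0 = y → f n = z →
    ∃ (n' : ℕ) (g : ℕ → V d), IsOpenPath ωp n' g ∧ g 0 = y ∧ g n' = z ∧
      DisjointPathDecomposition ωp n f n' g ∧
      eSize (pathEdges n' g \ pathEdges n f) ≤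
        ((ρ * N : ℕ) : ℝ≥0∞) *
          (eSize (badTouching ωp N β (visitedSites N n f)) + eSize (closedEdges ωp n f))


/-! ### Deterministic lemmas -/

section Det
variable {d : ℕ}

lemma sym2dist1_mk (a b : V d) : sym2dist1 s(a, b) = dist1 a b := rfl

lemma dist1_symm (a b : V d) : dist1 a b = dist1 b a := by
  unfold dist1
  exact Finset.sum_congr rfl fun i _ => by rw [← Int.natAbs_neg, neg_sub]

lemma dist1_triangle (a b c : V d) : dist1 a c ≤ dist1 a b + dist1 b c := by
  unfold dist1
  rw [← Finset.sum_add_distrib]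
  apply Finset.sum_le_sum
  intro i _
  have : a i - c i = (a i - b i) + (b i - c i) := by ring
  rw [this]
  exact Int.natAbs_add_le _ _

lemma edgeOpen_dist1 {ω : Config d} {a b : V d} (h : edgeOpen ω a b) : dist1 a b = 1 := by
  obtain ⟨h1, _⟩ := h
  rwa [sym2dist1_mk] at h1

lemma isOpenPath_dist1 {ω : Config d} {n : ℕ} {f : ℕ → V d} (h : IsOpenPath ω n f) :
    ∀ i ≤ n, dist1 (f 0) (f i) ≤ i := by
  intro i hi
  induction i with
  | zero => simp [dist1]
  | succ k ih =>
    have hk := ih (le_trans (Nat.le_succ k) hi)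
    calc dist1 (f 0) (f (k+1)) ≤ dist1 (f 0) (f k) + dist1 (f k) (f (k+1)) :=
          dist1_triangle _ _ _
      _ ≤ k + 1 := by
          have := edgeOpen_dist1 (h k (by omega))
          omega

/-- The set of possible lengths of open paths between two points. -/
def lenSet (ω : Config d) (x y : V d) : Set ℕ :=
  {n | ∃ f : ℕ → V d, IsOpenPath ω n f ∧ f 0 = x ∧ f n = y}

lemma chemDist_eq_cast_iff (ω : Config d) (x y : V d) (n : ℕ) :
    chemDist ω x y = (n : ℝ≥0∞) ↔ n ∈ lenSet ω x y ∧ ∀ m < n, m ∉ lenSet ω x y := by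
  have hR : {r : ℝ≥0∞ | ∃ (m : ℕ) (f : ℕ → V d),
      IsOpenPath ω m f ∧ f 0 = x ∧ f m = y ∧ r = (m : ℝ≥0∞)}
      = (fun m : ℕ => (m : ℝ≥0∞)) '' (lenSet ω x y) := by
    ext r
    constructor
    · rintro ⟨m, f, h1, h2, h3, rfl⟩; exact ⟨m, ⟨f, h1, h2, h3⟩, rfl⟩
    · rintro ⟨m, ⟨f, h1, h2, h3⟩, rfl⟩; exact ⟨m, f, h1, h2, h3, rfl⟩
  constructor
  · intro h
    have hne : (lenSet ω x y).Nonempty := by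
      by_contra hemp
      rw [Set.not_nonempty_iff_eq_empty] at hemp
      rw [chemDist, hR, hemp] at h
      simp at h
    set m₀ := sInf (lenSet ω x y) with hm₀
    have hmem : m₀ ∈ lenSet ω x y := Nat.sInf_mem hne
    have hval : chemDist ω x y = (m₀ : ℝ≥0∞) := by
      rw [chemDist, hR]
      apply le_antisymm
      · exact sInf_le ⟨m₀, hmem, rfl⟩
      · apply le_sInf
        rintro r ⟨m, hm, rfl⟩
        exact_mod_cast Nat.cast_le.2 (Nat.sInf_le hm)
    rw [h] at hval
    have : n = m₀ := by exact_mod_cast hval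
    subst this
    exact ⟨hmem, fun m hm hmem' => absurd (Nat.sInf_le hmem') (by omega)⟩
  · rintro ⟨hn, hmin⟩
    rw [chemDist, hR]
    apply le_antisymm
    · exact sInf_le ⟨n, hn, rfl⟩
    · apply le_sInf
      rintro r ⟨m, hm, rfl⟩
      have : n ≤ m := by by_contra h; exact hmin m (by omega) hm
      exact_mod_cast Nat.cast_le.2 this

lemma connected_chemDist_eq (ω : Config d) (x y : V d) (h : Connected ω x y) :
    chemDist ω x y = ((sInf (lenSet ω x y) : ℕ) : ℝ≥0∞) ∧ (lenSet ω x y).Nonempty := by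
  have hne : (lenSet ω x y).Nonempty := by
    by_contra hemp
    rw [Set.not_nonempty_iff_eq_empty] at hemp
    apply h
    rw [chemDist]
    have hRe : {r : ℝ≥0∞ | ∃ (m : ℕ) (f : ℕ → V d),
        IsOpenPath ω m f ∧ f 0 = x ∧ f m = y ∧ r = (m : ℝ≥0∞)} = ∅ := by
      rw [Set.eq_empty_iff_forall_notMem]
      rintro r ⟨m, f, h1, h2, h3, rfl⟩
      exact Set.eq_empty_iff_forall_notMem.1 hemp m ⟨f, h1, h2, h3⟩
    rw [hRe, sInf_empty]
  refine ⟨?_, hne⟩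
  rw [chemDist_eq_cast_iff]
  exact ⟨Nat.sInf_mem hne, fun m hm hmem => absurd (Nat.sInf_le hmem) (by omega)⟩

/-- The predicate selecting geodesics from `x` to `y` in `geod`. -/
abbrev geodPred (ω : Config d) (x y : V d) (nf : ℕ × (ℕ → V d)) : Prop :=
  IsOpenPath ω nf.1 nf.2 ∧ nf.2 0 = x ∧ nf.2 nf.1 = y ∧ (nf.1 : ℝ≥0∞) = chemDist ω x y

lemma connected_exists_geod (ω : Config d) (x y : V d) (h : Connected ω x y) :
    ∃ nf : ℕ × (ℕ → V d), geodPred ω x y nf := by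
  obtain ⟨hval, hne⟩ := connected_chemDist_eq ω x y h
  obtain ⟨f, h1, h2, h3⟩ := Nat.sInf_mem hne
  exact ⟨(sInf (lenSet ω x y), f), h1, h2, h3, hval.symm⟩

lemma geod_spec (ω : Config d) (x y : V d) (h : Connected ω x y) :
    geodPred ω x y (geod ω x y) := by
  have hex : ∃ nf : ℕ × (ℕ → V d), IsOpenPath ω nf.1 nf.2 ∧ nf.2 0 = x ∧ nf.2 nf.1 = y ∧
      (nf.1 : ℝ≥0∞) = chemDist ω x y := connected_exists_geod ω x y h
  unfold geod
  rw [dif_pos hex]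
  exact hex.choose_spec

lemma geod_min (ω : Config d) (x y : V d) (h : Connected ω x y) {m : ℕ} (hm : m ∈ lenSet ω x y) :
    (geod ω x y).1 ≤ m := by
  obtain ⟨hval, hne⟩ := connected_chemDist_eq ω x y h
  have := (geod_spec ω x y h).2.2.2
  rw [hval] at this
  have : (geod ω x y).1 = sInf (lenSet ω x y) := by exact_mod_cast this
  rw [this]
  exact Nat.sInf_le hm

/-- Geodesics are self-avoiding. -/
lemma geod_selfavoid (ω : Config d) (x y : V d) (h : Connected ω x y) :
    ∀ i ≤ (geod ω x y).1, ∀ j ≤ (geod ω x y).1,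
      (geod ω x y).2 i = (geod ω x y).2 j → i = j := by
  obtain ⟨hop, h0, hn, _⟩ := geod_spec ω x y h
  set n := (geod ω x y).1 with hnn
  set f := (geod ω x y).2 with hf
  have key : ∀ i j, i ≤ n → j ≤ n → i < j → f i = f j → False := by
    intro i j hi hj hij heq
    by_cases hjn : j = n
    · subst hjn
      have hmem : i ∈ lenSet ω x y :=
        ⟨f, fun k hk => hop k (by omega), h0, by rw [heq]; exact hn⟩
      have := geod_min ω x y h hmem
      omega
    · set g : ℕ → V d := fun k => if k ≤ i then f k else f (k + (j - i)) with hg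
      have hgval1 : ∀ k, k ≤ i → g k = f k := by
        intro k hk; simp only [hg]; rw [if_pos hk]
      have hgval2 : ∀ k, ¬ k ≤ i → g k = f (k + (j - i)) := by
        intro k hk; simp only [hg]; rw [if_neg hk]
      have hglen : n - (j - i) ∈ lenSet ω x y := by
        refine ⟨g, ?_, ?_, ?_⟩
        · intro k hk
          rcases lt_trichotomy k i with hki | hki | hki
          · rw [hgval1 k (by omega), hgval1 (k+1) (by omega)]
            exact hop k (by omega)
          · subst hki
            rw [hgval1 k le_rfl, hgval2 (k+1) (by omega),
              show k + 1 + (j - k) = j + 1 by omega, heq]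
            exact hop j (by omega)
          · rw [hgval2 k (by omega), hgval2 (k+1) (by omega),
              show k + 1 + (j - i) = k + (j - i) + 1 by omega]
            exact hop (k + (j - i)) (by omega)
        · rw [hgval1 0 (by omega)]; exact h0
        · rw [hgval2 (n - (j - i)) (by omega), show n - (j - i) + (j - i) = n by omega]
          exact hn
      have := geod_min ω x y h hglen
      omega
  intro i hi j hj heq
  rcases lt_trichotomy i j with hlt | heqq | hgt
  · exact (key i j hi hj hlt heq).elim
  · exact heqq
  · exact (key j i hj hi hgt heq.symm).elim

end Det

/-! ### Traces of paths -/

section Trace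
variable {d : ℕ}

/-- Extend a finite trace to a path `ℕ → V d`. -/
def extp (n : ℕ) (g : Fin (n + 1) → V d) : ℕ → V d :=
  fun i => g ⟨min i n, by omega⟩

lemma extp_eq (n : ℕ) (g : Fin (n + 1) → V d) (i : ℕ) (hi : i ≤ n) :
    extp n g i = g ⟨i, by omega⟩ :=
  congrArg g (Fin.ext (by simp [min_eq_left hi]))

lemma extp_val {n : ℕ} (g : Fin (n + 1) → V d) (i : Fin (n + 1)) :
    extp n g (i : ℕ) = g i := by
  rw [extp_eq n g i (by omega)]

lemma isOpenPath_congr {ω : Config d} {n : ℕ} {f f' : ℕ → V d}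
    (h : ∀ i ≤ n, f i = f' i) (hp : IsOpenPath ω n f) : IsOpenPath ω n f' := by
  intro i hi
  rw [← h i (by omega), ← h (i+1) (by omega)]
  exact hp i hi

/-- The set of traces of geodesics (for given endpoints and length). -/
def traceSet (ω : Config d) (x y : V d) (n : ℕ) : Set (Fin (n + 1) → V d) :=
  {g | IsOpenPath ω n (extp n g) ∧ extp n g 0 = x ∧ extp n g n = y}

lemma mem_lenSet_iff_trace (ω : Config d) (x y : V d) (n : ℕ) :
    n ∈ lenSet ω x y ↔ (traceSet ω x y n).Nonempty := by
  constructor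
  · rintro ⟨f, h1, h2, h3⟩
    refine ⟨fun i => f i, ?_, ?_, ?_⟩
    · exact isOpenPath_congr (fun i hi => by rw [extp_eq n _ i hi]) h1
    · rw [extp_eq n _ 0 (by omega)]; exact h2
    · rw [extp_eq n _ n le_rfl]; exact h3
  · rintro ⟨g, h1, h2, h3⟩
    exact ⟨extp n g, h1, h2, h3⟩

lemma traceSet_finite (ω : Config d) (x y : V d) (n : ℕ) : (traceSet ω x y n).Finite := by
  have hsub : traceSet ω x y n ⊆ Set.pi Set.univ
      (fun _ : Fin (n + 1) => Set.pi Set.univ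
        (fun k : Fin d => Set.Icc (x k - (n : ℤ)) (x k + (n : ℤ)))) := by
    rintro g ⟨h1, h2, h3⟩
    intro i _
    intro k _
    have hdist : dist1 (extp n g 0) (extp n g i) ≤ (i : ℕ) := isOpenPath_dist1 h1 i (by omega)
    rw [h2] at hdist
    have hcoord : (x k - extp n g (i : ℕ) k).natAbs ≤ dist1 x (extp n g (i : ℕ)) := by
      unfold dist1
      exact Finset.single_le_sum (f := fun k => (x k - extp n g (i : ℕ) k).natAbs)
        (fun _ _ => Nat.zero_le _) (Finset.mem_univ k)
    have hin : (x k - extp n g (i : ℕ) k).natAbs ≤ n := le_trans (le_trans hcoord hdist) (by omega)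
    rw [extp_val g i] at hin
    rw [Set.mem_Icc]
    have habs : |x k - g i k| ≤ (n : ℤ) := by
      rw [Int.abs_eq_natAbs]
      exact_mod_cast hin
    obtain ⟨hl, hr⟩ := abs_le.1 habs
    constructor <;> linarith
  exact Set.Finite.subset (Set.Finite.pi (fun _ => Set.Finite.pi (fun _ => Set.finite_Icc _ _))) hsub

open Classical in
private lemma choose_dite_congr {α : Type*} (p q : α → Prop) (hpq : p = q) (dflt : α) :
    (if h : ∃ a, p a then h.choose else dflt) = (if h : ∃ a, q a then h.choose else dflt) := by
  subst hpq; rfl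

/-- `geod` only depends on the configuration through the chemical distance and
the set of geodesic traces. -/
lemma geod_congr (ω ω' : Config d) (x y : V d) (n : ℕ)
    (hc : chemDist ω x y = (n : ℝ≥0∞)) (hc' : chemDist ω' x y = (n : ℝ≥0∞))
    (htr : traceSet ω x y n = traceSet ω' x y n) :
    geod ω x y = geod ω' x y := by
  have hiff : ∀ (ν ν' : Config d), chemDist ν x y = (n : ℝ≥0∞) →
      chemDist ν' x y = (n : ℝ≥0∞) → traceSet ν x y n = traceSet ν' x y n →
      ∀ nf : ℕ × (ℕ → V d), geodPred ν x y nf → geodPred ν' x y nf := by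
    rintro ν ν' hcn hcn' htrn nf ⟨hop, h0, hend, hchem⟩
    have hlen : nf.1 = n := by
      rw [hcn] at hchem
      exact_mod_cast hchem
    subst hlen
    set g : Fin (nf.1 + 1) → V d := fun i => nf.2 i with hgdef
    have hagree : ∀ i ≤ nf.1, extp nf.1 g i = nf.2 i := by
      intro i hi
      rw [extp_eq _ _ i hi]
    have hgmem : g ∈ traceSet ν x y nf.1 := by
      refine ⟨isOpenPath_congr (fun i hi => (hagree i hi).symm) hop, ?_, ?_⟩
      · rw [hagree 0 (by omega)]; exact h0
      · rw [hagree nf.1 le_rfl]; exact hend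
    rw [htrn] at hgmem
    obtain ⟨hop', h0', hend'⟩ := hgmem
    refine ⟨isOpenPath_congr hagree hop', ?_, ?_, ?_⟩
    · rw [← hagree 0 (by omega)]; exact h0'
    · rw [← hagree nf.1 le_rfl]; exact hend'
    · rw [hcn']
  have hP : (fun nf : ℕ × (ℕ → V d) => geodPred ω x y nf)
      = fun nf => geodPred ω' x y nf :=
    funext fun nf => propext ⟨hiff ω ω' hc hc' htr nf, hiff ω' ω hc' hc htr.symm nf⟩
  unfold geod
  exact choose_dite_congr _ _ hP _

end Trace

/-! ### Measurability -/

section Meas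
variable {d : ℕ}

lemma measurableSet_coord (e : Edge d) (b : Bool) :
    MeasurableSet {ω : Config d | ω e = b} := by
  have : {ω : Config d | ω e = b} = (fun ω : Config d => ω e) ⁻¹' {b} := rfl
  rw [this]
  exact measurable_pi_apply e (measurableSet_singleton b)

lemma measurableSet_edgeOpen (a b : V d) :
    MeasurableSet {ω : Config d | edgeOpen ω a b} := by
  by_cases h : sym2dist1 s(a, b) = 1
  · have : {ω : Config d | edgeOpen ω a b} = {ω : Config d | ω ⟨s(a, b), h⟩ = true} := by
      ext ω
      constructor
      · rintro ⟨h', hω⟩; exact hω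
      · intro hω; exact ⟨h, hω⟩
    rw [this]
    exact measurableSet_coord _ _
  · have : {ω : Config d | edgeOpen ω a b} = ∅ := by
      rw [Set.eq_empty_iff_forall_notMem]
      rintro ω ⟨h', _⟩
      exact h h'
    rw [this]
    exact MeasurableSet.empty

lemma measurableSet_isOpenPath (n : ℕ) (f : ℕ → V d) :
    MeasurableSet {ω : Config d | IsOpenPath ω n f} := by
  have : {ω : Config d | IsOpenPath ω n f}
      = ⋂ (i : ℕ) (_ : i < n), {ω : Config d | edgeOpen ω (f i) (f (i+1))} := by
    ext ω; simp [IsOpenPath, Set.mem_iInter]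
  rw [this]
  exact MeasurableSet.iInter fun i => MeasurableSet.iInter fun _ => measurableSet_edgeOpen _ _

lemma measurableSet_memTrace (x y : V d) (n : ℕ) (g : Fin (n + 1) → V d) :
    MeasurableSet {ω : Config d | g ∈ traceSet ω x y n} := by
  have : {ω : Config d | g ∈ traceSet ω x y n}
      = {ω : Config d | IsOpenPath ω n (extp n g)} ∩
        {ω : Config d | extp n g 0 = x ∧ extp n g n = y} := by
    ext ω
    simp only [traceSet, Set.mem_setOf_eq, Set.mem_inter_iff]
  rw [this]
  exact (measurableSet_isOpenPath _ _).inter (MeasurableSet.const _)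

lemma measurableSet_memLenSet (x y : V d) (m : ℕ) :
    MeasurableSet {ω : Config d | m ∈ lenSet ω x y} := by
  have : {ω : Config d | m ∈ lenSet ω x y}
      = ⋃ g : Fin (m + 1) → V d, {ω : Config d | g ∈ traceSet ω x y m} := by
    ext ω
    simp only [Set.mem_setOf_eq, Set.mem_iUnion]
    rw [mem_lenSet_iff_trace]
    exact ⟨fun ⟨g, hg⟩ => ⟨g, hg⟩, fun ⟨g, hg⟩ => ⟨g, hg⟩⟩
  rw [this]
  exact MeasurableSet.iUnion fun g => measurableSet_memTrace x y m g

lemma measurableSet_chemEq (x y : V d) (n : ℕ) :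
    MeasurableSet {ω : Config d | chemDist ω x y = (n : ℝ≥0∞)} := by
  have : {ω : Config d | chemDist ω x y = (n : ℝ≥0∞)}
      = {ω : Config d | n ∈ lenSet ω x y} ∩
        ⋂ (m : ℕ) (_ : m < n), {ω : Config d | m ∈ lenSet ω x y}ᶜ := by
    ext ω
    simp only [Set.mem_setOf_eq, Set.mem_inter_iff, Set.mem_iInter, Set.mem_compl_iff]
    rw [chemDist_eq_cast_iff]
  rw [this]
  exact (measurableSet_memLenSet x y n).inter
    (MeasurableSet.iInter fun m => MeasurableSet.iInter fun _ =>
      (measurableSet_memLenSet x y m).compl)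

/-- The partition event: the chemical distance is `n` and the set of geodesic traces
is exactly `S`. -/
def partEvent (x y : V d) (n : ℕ) (S : Finset (Fin (n + 1) → V d)) : Set (Config d) :=
  {ω | chemDist ω x y = (n : ℝ≥0∞) ∧ ∀ g, g ∈ S ↔ g ∈ traceSet ω x y n}

lemma measurableSet_partEvent (x y : V d) (n : ℕ) (S : Finset (Fin (n + 1) → V d)) :
    MeasurableSet (partEvent x y n S) := by
  have : partEvent x y n S = {ω : Config d | chemDist ω x y = (n : ℝ≥0∞)} ∩
      ⋂ g : Fin (n + 1) → V d,
        (if g ∈ S then {ω : Config d | g ∈ traceSet ω x y n}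
          else {ω : Config d | g ∈ traceSet ω x y n}ᶜ) := by
    ext ω
    simp only [partEvent, Set.mem_setOf_eq, Set.mem_inter_iff, Set.mem_iInter]
    constructor
    · rintro ⟨h1, h2⟩
      refine ⟨h1, fun g => ?_⟩
      by_cases hg : g ∈ S
      · rw [if_pos hg]; exact (h2 g).1 hg
      · rw [if_neg hg]; exact fun hmem => hg ((h2 g).2 hmem)
    · rintro ⟨h1, h2⟩
      refine ⟨h1, fun g => ?_⟩
      have := h2 g
      by_cases hg : g ∈ S
      · rw [if_pos hg] at this; exact ⟨fun _ => this, fun _ => hg⟩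
      · rw [if_neg hg] at this; exact ⟨fun h => absurd h hg, fun h => absurd h this⟩
  rw [this]
  refine (measurableSet_chemEq x y n).inter (MeasurableSet.iInter fun g => ?_)
  by_cases hg : g ∈ S
  · rw [if_pos hg]; exact measurableSet_memTrace x y n g
  · rw [if_neg hg]; exact (measurableSet_memTrace x y n g).compl

lemma partEvent_cover {x y : V d} {ω : Config d} (h : Connected ω x y) :
    ∃ (n : ℕ) (S : Finset (Fin (n + 1) → V d)), ω ∈ partEvent x y n S := by
  obtain ⟨hval, hne⟩ := connected_chemDist_eq ω x y h
  refine ⟨sInf (lenSet ω x y), (traceSet_finite ω x y _).toFinset, hval, fun g => ?_⟩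
  rw [Set.Finite.mem_toFinset]

lemma partEvent_disjoint (x y : V d) (n n' : ℕ) (S : Finset (Fin (n + 1) → V d))
    (S' : Finset (Fin (n' + 1) → V d)) {ω : Config d}
    (h : ω ∈ partEvent x y n S) (h' : ω ∈ partEvent x y n' S')
    (hne : ¬ (n = n' ∧ HEq S S')) : False := by
  obtain ⟨h1, h2⟩ := h
  obtain ⟨h1', h2'⟩ := h'
  have hnn : n = n' := by
    rw [h1] at h1'
    exact_mod_cast h1'
  subst hnn
  apply hne
  refine ⟨rfl, heq_of_eq ?_⟩
  ext g
  rw [h2 g, h2' g]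

lemma partEvent_geod_const {x y : V d} {n : ℕ} {S : Finset (Fin (n + 1) → V d)}
    {ω ω' : Config d} (h : ω ∈ partEvent x y n S) (h' : ω' ∈ partEvent x y n S) :
    geod ω x y = geod ω' x y := by
  obtain ⟨h1, h2⟩ := h
  obtain ⟨h1', h2'⟩ := h'
  refine geod_congr ω ω' x y n h1 h1' ?_
  ext g
  rw [← h2 g, h2' g]

lemma partEvent_connected {x y : V d} {n : ℕ} {S : Finset (Fin (n + 1) → V d)}
    {ω : Config d} (h : ω ∈ partEvent x y n S) : Connected ω x y := by
  rw [Connected, h.1]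
  exact ENNReal.natCast_ne_top n

end Meas

/-! ### Probabilistic lemmas -/

section Prob
variable {d : ℕ} {p q : ℝ}

/-- Weight of a pair of Booleans under the coupling. -/
noncomputable def wVZ (p q : ℝ) (v : Bool × Bool) : ℝ≥0∞ :=
  ENNReal.ofReal (if v.1 then q else 1 - q) * ENNReal.ofReal (if v.2 then p / q else 1 - p / q)

noncomputable def wV (q : ℝ) (b : Bool) : ℝ≥0∞ := ENNReal.ofReal (if b then q else 1 - q)

noncomputable def wZ (p q : ℝ) (b : Bool) : ℝ≥0∞ :=
  ENNReal.ofReal (if b then p / q else 1 - p / q)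

lemma wVZ_eq (v : Bool × Bool) : wVZ p q v = wV q v.1 * wZ p q v.2 := rfl

variable (hq0 : 0 ≤ q) (hq1 : q ≤ 1) (hr0 : 0 ≤ p / q) (hr1 : p / q ≤ 1)

lemma wV_sum (hq0 : 0 ≤ q) (hq1 : q ≤ 1) : wV q true + wV q false = 1 := by
  show ENNReal.ofReal q + ENNReal.ofReal (1 - q) = 1
  rw [← ENNReal.ofReal_add hq0 (by linarith)]
  norm_num

lemma wZ_sum (hr0 : 0 ≤ p / q) (hr1 : p / q ≤ 1) : wZ p q true + wZ p q false = 1 := by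
  show ENNReal.ofReal (p / q) + ENNReal.ofReal (1 - p / q) = 1
  rw [← ENNReal.ofReal_add hr0 (by linarith)]
  norm_num

lemma wVZ_sum_V (hq0 : 0 ≤ q) (hq1 : q ≤ 1) (b : Bool) :
    wVZ p q (true, b) + wVZ p q (false, b) = wZ p q b := by
  rw [wVZ_eq, wVZ_eq, ← add_mul]
  show (wV q true + wV q false) * wZ p q b = wZ p q b
  rw [wV_sum hq0 hq1, one_mul]

lemma wVZ_sum_Z (hr0 : 0 ≤ p / q) (hr1 : p / q ≤ 1) (b : Bool) :
    wVZ p q (b, true) + wVZ p q (b, false) = wV q b := by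
  rw [wVZ_eq, wVZ_eq, ← mul_add]
  show wV q b * (wZ p q true + wZ p q false) = wV q b
  rw [wZ_sum hr0 hr1, mul_one]

instance : Countable (Edge d) := by
  unfold Edge
  infer_instance

/-- The generic mixed event. -/
def mixedEv (s t r : Finset (Edge d)) (h : Edge d → Bool × Bool) (f g : Edge d → Bool) :
    Set (CConfig d) :=
  {u | (∀ e ∈ s, u e = h e) ∧ (∀ e ∈ t, (u e).1 = f e) ∧ (∀ e ∈ r, (u e).2 = g e)}

lemma measurableSet_pair_coord (e : Edge d) (v : Bool × Bool) :
    MeasurableSet {u : CConfig d | u e = v} := by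
  have : {u : CConfig d | u e = v} = (fun u : CConfig d => u e) ⁻¹' {v} := rfl
  rw [this]
  exact measurable_pi_apply e (measurableSet_singleton v)

lemma measurableSet_fst_coord (e : Edge d) (b : Bool) :
    MeasurableSet {u : CConfig d | (u e).1 = b} := by
  have : {u : CConfig d | (u e).1 = b}
      = (fun u : CConfig d => u e) ⁻¹' (({b} : Set Bool) ×ˢ (Set.univ : Set Bool)) := by
    ext u
    simp only [Set.mem_setOf_eq, Set.mem_preimage, Set.mem_prod, Set.mem_singleton_iff,
      Set.mem_univ, and_true]
  rw [this]
  exact measurable_pi_apply e ((measurableSet_singleton b).prod MeasurableSet.univ)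

lemma measurableSet_snd_coord (e : Edge d) (b : Bool) :
    MeasurableSet {u : CConfig d | (u e).2 = b} := by
  have : {u : CConfig d | (u e).2 = b}
      = (fun u : CConfig d => u e) ⁻¹' ((Set.univ : Set Bool) ×ˢ ({b} : Set Bool)) := by
    ext u
    simp only [Set.mem_setOf_eq, Set.mem_preimage, Set.mem_prod, Set.mem_singleton_iff,
      Set.mem_univ, true_and]
  rw [this]
  exact measurable_pi_apply e (MeasurableSet.univ.prod (measurableSet_singleton b))

lemma measurableSet_mixedEv (s t r : Finset (Edge d)) (h : Edge d → Bool × Bool)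
    (f g : Edge d → Bool) : MeasurableSet (mixedEv s t r h f g) := by
  have : mixedEv s t r h f g
      = (⋂ (e : Edge d) (_ : e ∈ s), {u : CConfig d | u e = h e}) ∩
        ((⋂ (e : Edge d) (_ : e ∈ t), {u : CConfig d | (u e).1 = f e}) ∩
          ⋂ (e : Edge d) (_ : e ∈ r), {u : CConfig d | (u e).2 = g e}) := by
    ext u
    simp only [mixedEv, Set.mem_setOf_eq, Set.mem_inter_iff, Set.mem_iInter]
  rw [this]
  exact ((MeasurableSet.iInter fun e => MeasurableSet.iInter fun _ =>
      measurableSet_pair_coord e (h e)).inter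
    (((MeasurableSet.iInter fun e => MeasurableSet.iInter fun _ =>
      measurableSet_fst_coord e (f e)).inter
    (MeasurableSet.iInter fun e => MeasurableSet.iInter fun _ =>
      measurableSet_snd_coord e (g e)))))

end Prob

section Prob2
variable {d : ℕ} {p q : ℝ}

open Finset in
lemma Q_mixedEv (cpl : CouplingMeasure d p q) (hq0 : 0 ≤ q) (hq1 : q ≤ 1)
    (hr0 : 0 ≤ p / q) (hr1 : p / q ≤ 1) :
    ∀ (r : Finset (Edge d)) (g : Edge d → Bool) (t : Finset (Edge d)) (f : Edge d → Bool)
      (s : Finset (Edge d)) (h : Edge d → Bool × Bool),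
      Disjoint s t → Disjoint s r → Disjoint t r →
      cpl.Q (mixedEv s t r h f g)
        = (∏ e ∈ s, wVZ p q (h e)) * (∏ e ∈ t, wV q (f e)) * (∏ e ∈ r, wZ p q (g e)) := by
  classical
  intro r
  induction r using Finset.induction_on with
  | empty =>
    intro g t
    induction t using Finset.induction_on with
    | empty =>
      intro f s h _ _ _
      have hev : mixedEv s ∅ ∅ h f g = {u : CConfig d | ∀ e ∈ s, u e = h e} := by
        ext u; simp [mixedEv]
      rw [hev, cpl.iid s h]
      simp [wVZ]
    | @insert a t' ha IH =>
      intro f s h hst hsr htr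
      have hsa : a ∉ s := fun hc => (Finset.disjoint_left.1 hst) hc (Finset.mem_insert_self a t')
      have hsplit : mixedEv s (insert a t') ∅ h f g
          = mixedEv (insert a s) t' ∅ (Function.update h a (f a, true)) f g ∪
            mixedEv (insert a s) t' ∅ (Function.update h a (f a, false)) f g := by
        ext u
        simp only [mixedEv, Set.mem_setOf_eq, Set.mem_union, Finset.mem_insert]
        constructor
        · rintro ⟨h1, h2, h3⟩
          have hfa : (u a).1 = f a := h2 a (Or.inl rfl)
          have hcase : ∀ b : Bool, (u a).2 = b →
              ((∀ e, e = a ∨ e ∈ s → u e = Function.update h a (f a, b) e) ∧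
                (∀ e ∈ t', (u e).1 = f e) ∧ ∀ e ∈ (∅ : Finset (Edge d)), (u e).2 = g e) := by
            intro b hb
            refine ⟨?_, fun e he => h2 e (Or.inr he), h3⟩
            rintro e (rfl | he)
            · rw [Function.update_self]
              exact Prod.ext hfa hb
            · rw [Function.update_of_ne (ne_of_mem_of_not_mem he hsa) _ h]
              exact h1 e he
          cases hub : (u a).2 with
          | true => exact Or.inl (hcase true hub)
          | false => exact Or.inr (hcase false hub)
        · have hback : ∀ b : Bool,
              ((∀ e, e = a ∨ e ∈ s → u e = Function.update h a (f a, b) e) ∧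
                (∀ e ∈ t', (u e).1 = f e) ∧ ∀ e ∈ (∅ : Finset (Edge d)), (u e).2 = g e) →
              ((∀ e ∈ s, u e = h e) ∧ (∀ e, e = a ∨ e ∈ t' → (u e).1 = f e) ∧
                ∀ e ∈ (∅ : Finset (Edge d)), (u e).2 = g e) := by
            rintro b ⟨h1, h2, h3⟩
            refine ⟨fun e he => ?_, ?_, h3⟩
            · rw [← Function.update_of_ne (ne_of_mem_of_not_mem he hsa) _ h]
              exact h1 e (Or.inr he)
            · rintro e (rfl | he)
              · have := h1 e (Or.inl rfl)
                rw [this, Function.update_self]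
              · exact h2 e he
          rintro (hu | hu)
          · exact hback true hu
          · exact hback false hu
      have hdisj : Disjoint (mixedEv (insert a s) t' ∅ (Function.update h a (f a, true)) f g)
          (mixedEv (insert a s) t' ∅ (Function.update h a (f a, false)) f g) := by
        rw [Set.disjoint_left]
        rintro u ⟨h1, _, _⟩ ⟨h1', _, _⟩
        have e1 := h1 a (Finset.mem_insert_self a s)
        have e2 := h1' a (Finset.mem_insert_self a s)
        rw [Function.update_self] at e1 e2
        rw [e1] at e2
        have := congrArg Prod.snd e2
        simp at this
      have hd1 : Disjoint (insert a s) t' := by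
        rw [Finset.disjoint_insert_left]
        exact ⟨ha, Finset.disjoint_of_subset_right (Finset.subset_insert a t') hst⟩
      have hprod : ∀ b : Bool, ∏ e ∈ insert a s, wVZ p q (Function.update h a (f a, b) e)
          = wVZ p q (f a, b) * ∏ e ∈ s, wVZ p q (h e) := by
        intro b
        rw [Finset.prod_insert hsa, Function.update_self]
        congr 1
        exact Finset.prod_congr rfl fun e he =>
          congrArg _ (Function.update_of_ne (ne_of_mem_of_not_mem he hsa) _ h)
      rw [hsplit, measure_union hdisj (measurableSet_mixedEv _ _ _ _ _ _),
        IH f (insert a s) _ hd1 (Finset.disjoint_empty_right _) (Finset.disjoint_empty_right _),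
        IH f (insert a s) _ hd1 (Finset.disjoint_empty_right _) (Finset.disjoint_empty_right _),
        hprod true, hprod false, Finset.prod_insert ha]
      have : wVZ p q (f a, true) + wVZ p q (f a, false) = wV q (f a) := wVZ_sum_Z hr0 hr1 (f a)
      rw [← this]
      ring
  | @insert a r' ha IH =>
    intro g t f s h hst hsr htr
    have hsa : a ∉ s := fun hc => (Finset.disjoint_left.1 hsr) hc (Finset.mem_insert_self a r')
    have hta : a ∉ t := fun hc => (Finset.disjoint_left.1 htr) hc (Finset.mem_insert_self a r')
    have hsplit : mixedEv s t (insert a r') h f g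
        = mixedEv (insert a s) t r' (Function.update h a (true, g a)) f g ∪
          mixedEv (insert a s) t r' (Function.update h a (false, g a)) f g := by
      ext u
      simp only [mixedEv, Set.mem_setOf_eq, Set.mem_union, Finset.mem_insert]
      constructor
      · rintro ⟨h1, h2, h3⟩
        have hga : (u a).2 = g a := h3 a (Or.inl rfl)
        have hcase : ∀ b : Bool, (u a).1 = b →
            ((∀ e, e = a ∨ e ∈ s → u e = Function.update h a (b, g a) e) ∧
              (∀ e ∈ t, (u e).1 = f e) ∧ ∀ e ∈ r', (u e).2 = g e) := by
          intro b hb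
          refine ⟨?_, h2, fun e he => h3 e (Or.inr he)⟩
          rintro e (rfl | he)
          · rw [Function.update_self]
            exact Prod.ext hb hga
          · rw [Function.update_of_ne (ne_of_mem_of_not_mem he hsa) _ h]
            exact h1 e he
        cases hub : (u a).1 with
        | true => exact Or.inl (hcase true hub)
        | false => exact Or.inr (hcase false hub)
      · have hback : ∀ b : Bool,
            ((∀ e, e = a ∨ e ∈ s → u e = Function.update h a (b, g a) e) ∧
              (∀ e ∈ t, (u e).1 = f e) ∧ ∀ e ∈ r', (u e).2 = g e) →
            ((∀ e ∈ s, u e = h e) ∧ (∀ e ∈ t, (u e).1 = f e) ∧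
              ∀ e, e = a ∨ e ∈ r' → (u e).2 = g e) := by
          rintro b ⟨h1, h2, h3⟩
          refine ⟨fun e he => ?_, h2, ?_⟩
          · rw [← Function.update_of_ne (ne_of_mem_of_not_mem he hsa) _ h]
            exact h1 e (Or.inr he)
          · rintro e (rfl | he)
            · have := h1 e (Or.inl rfl)
              rw [this, Function.update_self]
            · exact h3 e he
        rintro (hu | hu)
        · exact hback true hu
        · exact hback false hu
    have hdisj : Disjoint (mixedEv (insert a s) t r' (Function.update h a (true, g a)) f g)
        (mixedEv (insert a s) t r' (Function.update h a (false, g a)) f g) := by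
      rw [Set.disjoint_left]
      rintro u ⟨h1, _, _⟩ ⟨h1', _, _⟩
      have e1 := h1 a (Finset.mem_insert_self a s)
      have e2 := h1' a (Finset.mem_insert_self a s)
      rw [Function.update_self] at e1 e2
      rw [e1] at e2
      have := congrArg Prod.fst e2
      simp at this
    have hd1 : Disjoint (insert a s) t := by
      rw [Finset.disjoint_insert_left]
      exact ⟨hta, hst⟩
    have hd2 : Disjoint (insert a s) r' := by
      rw [Finset.disjoint_insert_left]
      exact ⟨ha, Finset.disjoint_of_subset_right (Finset.subset_insert a r') hsr⟩
    have hd3 : Disjoint t r' := Finset.disjoint_of_subset_right (Finset.subset_insert a r') htr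
    have hprod : ∀ b : Bool, ∏ e ∈ insert a s, wVZ p q (Function.update h a (b, g a) e)
        = wVZ p q (b, g a) * ∏ e ∈ s, wVZ p q (h e) := by
      intro b
      rw [Finset.prod_insert hsa, Function.update_self]
      congr 1
      exact Finset.prod_congr rfl fun e he =>
        congrArg _ (Function.update_of_ne (ne_of_mem_of_not_mem he hsa) _ h)
    rw [hsplit, measure_union hdisj (measurableSet_mixedEv _ _ _ _ _ _),
      IH g t f (insert a s) _ hd1 hd2 hd3,
      IH g t f (insert a s) _ hd1 hd2 hd3,
      hprod true, hprod false, Finset.prod_insert ha]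
    have : wVZ p q (true, g a) + wVZ p q (false, g a) = wZ p q (g a) := wVZ_sum_V hq0 hq1 (g a)
    rw [← this]
    ring

end Prob2

section Prob3
variable {d : ℕ} {p q : ℝ}

/-- The `V`-cylinder event, as a preimage under `cfgQ`. -/
def Vcyl (t : Finset (Edge d)) (f : Edge d → Bool) : Set (Config d) :=
  {ω | ∀ e ∈ t, ω e = f e}

def Zcyl (r : Finset (Edge d)) (g : Edge d → Bool) : Set (CConfig d) :=
  {u | ∀ e ∈ r, (u e).2 = g e}

lemma cfgQ_preimage_Vcyl (t : Finset (Edge d)) (f : Edge d → Bool) :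
    cfgQ ⁻¹' (Vcyl t f) = {u : CConfig d | ∀ e ∈ t, (u e).1 = f e} := rfl

lemma Q_Vcyl (cpl : CouplingMeasure d p q) (hq0 : 0 ≤ q) (hq1 : q ≤ 1)
    (hr0 : 0 ≤ p / q) (hr1 : p / q ≤ 1) (t : Finset (Edge d)) (f : Edge d → Bool) :
    cpl.Q (cfgQ ⁻¹' (Vcyl t f)) = ∏ e ∈ t, wV q (f e) := by
  have hev : cfgQ ⁻¹' (Vcyl t f) = mixedEv ∅ t ∅ (fun _ => (true, true)) f (fun _ => true) := by
    ext u; simp [mixedEv, Vcyl, cfgQ]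
  rw [hev, Q_mixedEv cpl hq0 hq1 hr0 hr1 ∅ _ t f ∅ _ (by simp)
    (by simp) (Finset.disjoint_empty_right _)]
  simp

lemma Q_Zcyl (cpl : CouplingMeasure d p q) (hq0 : 0 ≤ q) (hq1 : q ≤ 1)
    (hr0 : 0 ≤ p / q) (hr1 : p / q ≤ 1) (r : Finset (Edge d)) (g : Edge d → Bool) :
    cpl.Q (Zcyl r g) = ∏ e ∈ r, wZ p q (g e) := by
  have hev : Zcyl r g = mixedEv ∅ ∅ r (fun _ => (true, true)) (fun _ => true) g := by
    ext u; simp [mixedEv, Zcyl]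
  rw [hev, Q_mixedEv cpl hq0 hq1 hr0 hr1 r _ ∅ _ ∅ _ (by simp)
    (by simp) (by simp)]
  simp

open Finset in
lemma Q_VZcyl (cpl : CouplingMeasure d p q) (hq0 : 0 ≤ q) (hq1 : q ≤ 1)
    (hr0 : 0 ≤ p / q) (hr1 : p / q ≤ 1) (t : Finset (Edge d)) (f : Edge d → Bool)
    (r : Finset (Edge d)) (g : Edge d → Bool) :
    cpl.Q (cfgQ ⁻¹' (Vcyl t f) ∩ Zcyl r g)
      = (∏ e ∈ t, wV q (f e)) * ∏ e ∈ r, wZ p q (g e) := by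
  classical
  have hev : cfgQ ⁻¹' (Vcyl t f) ∩ Zcyl r g
      = mixedEv (t ∩ r) (t \ r) (r \ t) (fun e => (f e, g e)) f g := by
    ext u
    simp only [mixedEv, Set.mem_setOf_eq, Set.mem_inter_iff, Set.mem_preimage, Vcyl, Zcyl,
      Finset.mem_inter, Finset.mem_sdiff]
    constructor
    · rintro ⟨h1, h2⟩
      exact ⟨fun e he => Prod.ext (h1 e he.1) (h2 e he.2),
        fun e he => h1 e he.1, fun e he => h2 e he.1⟩
    · rintro ⟨h1, h2, h3⟩
      constructor
      · intro e he
        by_cases her : e ∈ r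
        · exact congrArg Prod.fst (h1 e ⟨he, her⟩)
        · exact h2 e ⟨he, her⟩
      · intro e he
        by_cases het : e ∈ t
        · exact congrArg Prod.snd (h1 e ⟨het, he⟩)
        · exact h3 e ⟨he, het⟩
  have hd1 : Disjoint (t ∩ r) (t \ r) := by
    rw [Finset.disjoint_left]
    intro e he he'
    exact (Finset.mem_sdiff.1 he').2 (Finset.mem_inter.1 he).2
  have hd2 : Disjoint (t ∩ r) (r \ t) := by
    rw [Finset.disjoint_left]
    intro e he he'
    exact (Finset.mem_sdiff.1 he').2 (Finset.mem_inter.1 he).1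
  have hd3 : Disjoint (t \ r) (r \ t) := by
    rw [Finset.disjoint_left]
    intro e he he'
    exact (Finset.mem_sdiff.1 he).2 (Finset.mem_sdiff.1 he').1
  rw [hev, Q_mixedEv cpl hq0 hq1 hr0 hr1 (r \ t) g (t \ r) f (t ∩ r) _ hd1 hd2 hd3]
  · have h1 : ∀ e ∈ t ∩ r, wVZ p q (f e, g e) = wV q (f e) * wZ p q (g e) := fun e _ => rfl
    rw [Finset.prod_congr rfl h1, Finset.prod_mul_distrib]
    rw [show ∀ (A B C D : ℝ≥0∞), A * B * C * D = (A * C) * (B * D) by intros; ring]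
    congr 1
    · rw [Finset.prod_inter_mul_prod_diff]
    · rw [Finset.inter_comm, Finset.prod_inter_mul_prod_diff]

end Prob3

section Prob4
variable {d : ℕ} {p q : ℝ}

/-- The collection of `V`-cylinders. -/
def VcylSet (d : ℕ) : Set (Set (Config d)) :=
  {S | ∃ (t : Finset (Edge d)) (f : Edge d → Bool), S = Vcyl t f}

lemma measurableSet_Vcyl (t : Finset (Edge d)) (f : Edge d → Bool) :
    MeasurableSet (Vcyl t f) := by
  have : Vcyl t f = ⋂ (e : Edge d) (_ : e ∈ t), {ω : Config d | ω e = f e} := by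
    ext ω; simp [Vcyl]
  rw [this]
  exact MeasurableSet.iInter fun e => MeasurableSet.iInter fun _ => measurableSet_coord e (f e)

lemma isPiSystem_VcylSet : IsPiSystem (VcylSet d) := by
  classical
  rintro S1 ⟨t1, f1, rfl⟩ S2 ⟨t2, f2, rfl⟩ hne
  obtain ⟨ω₀, hω₀1, hω₀2⟩ := hne
  refine ⟨t1 ∪ t2, fun e => if e ∈ t1 then f1 e else f2 e, ?_⟩
  ext ω
  simp only [Set.mem_inter_iff, Vcyl, Set.mem_setOf_eq, Finset.mem_union]
  constructor
  · rintro ⟨h1, h2⟩ e he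
    by_cases he1 : e ∈ t1
    · rw [if_pos he1]; exact h1 e he1
    · rw [if_neg he1]; exact h2 e (he.resolve_left he1)
  · intro h
    constructor
    · intro e he
      have := h e (Or.inl he)
      rwa [if_pos he] at this
    · intro e he
      by_cases he1 : e ∈ t1
      · have h12 : f1 e = f2 e := by
          have ha := hω₀1 e he1
          have hb := hω₀2 e he
          rw [ha] at hb
          exact hb
      -- ω e = f2 e
        have := h e (Or.inl he1)
        rw [if_pos he1] at this
        rw [this, h12]
      · have := h e (Or.inr he)
        rwa [if_neg he1] at this

lemma generateFrom_VcylSet :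
    (inferInstance : MeasurableSpace (Config d)) = MeasurableSpace.generateFrom (VcylSet d) := by
  apply le_antisymm
  · have hpi : (inferInstance : MeasurableSpace (Config d))
        = MeasurableSpace.pi := rfl
    rw [hpi]
    rw [MeasurableSpace.pi]  -- hope: unfolds to iSup
    apply iSup_le
    intro e
    rintro S ⟨B, _, rfl⟩
    classical
    have hdecomp : (fun ω : Config d => ω e) ⁻¹' B
        = (if true ∈ B then {ω : Config d | ω e = true} else ∅) ∪
          (if false ∈ B then {ω : Config d | ω e = false} else ∅) := by
      ext ω
      simp only [Set.mem_preimage, Set.mem_union]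
      by_cases ht : true ∈ B <;> by_cases hf : false ∈ B <;>
        simp only [ht, hf, if_true, if_false, Set.mem_setOf_eq, Set.mem_empty_iff_false] <;>
        cases hωe : ω e <;> simp_all
    rw [hdecomp]
    have hcyl : ∀ b : Bool, MeasurableSet[MeasurableSpace.generateFrom (VcylSet d)]
        {ω : Config d | ω e = b} := by
      intro b
      apply MeasurableSpace.measurableSet_generateFrom
      refine ⟨{e}, fun _ => b, ?_⟩
      ext ω; simp [Vcyl]
    refine @MeasurableSet.union _ (MeasurableSpace.generateFrom (VcylSet d)) _ _ ?_ ?_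
    · split_ifs
      · exact hcyl true
      · exact @MeasurableSet.empty _ (MeasurableSpace.generateFrom (VcylSet d))
    · split_ifs
      · exact hcyl false
      · exact @MeasurableSet.empty _ (MeasurableSpace.generateFrom (VcylSet d))
  · apply MeasurableSpace.generateFrom_le
    rintro S ⟨t, f, rfl⟩
    exact measurableSet_Vcyl t f

lemma measurable_cfgQ : Measurable (cfgQ : CConfig d → Config d) :=
  measurable_pi_iff.mpr fun e => (measurable_pi_apply e).fst

lemma measurableSet_Zcyl (r : Finset (Edge d)) (g : Edge d → Bool) :
    MeasurableSet (Zcyl r g) := by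
  have : Zcyl r g = ⋂ (e : Edge d) (_ : e ∈ r), {u : CConfig d | (u e).2 = g e} := by
    ext u; simp [Zcyl]
  rw [this]
  exact MeasurableSet.iInter fun e => MeasurableSet.iInter fun _ => measurableSet_snd_coord e (g e)

/-- Independence of `V`-measurable events and `Z`-cylinders. -/
lemma Q_indep (cpl : CouplingMeasure d p q) (hq0 : 0 ≤ q) (hq1 : q ≤ 1)
    (hr0 : 0 ≤ p / q) (hr1 : p / q ≤ 1) (r : Finset (Edge d)) (g : Edge d → Bool)
    {T : Set (Config d)} (hT : MeasurableSet T) :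
    cpl.Q (cfgQ ⁻¹' T ∩ Zcyl r g) = cpl.Q (cfgQ ⁻¹' T) * ∏ e ∈ r, wZ p q (g e) := by
  haveI := cpl.prob
  set c : ℝ≥0∞ := ∏ e ∈ r, wZ p q (g e) with hc
  have hc1 : c ≤ 1 := by
    rw [hc]
    apply Finset.prod_le_one (fun e _ => zero_le)
    intro e _
    unfold wZ
    split_ifs
    · exact ENNReal.ofReal_le_one.2 hr1
    · exact ENNReal.ofReal_le_one.2 (by linarith)
  set μ1 : Measure (Config d) := (cpl.Q.restrict (Zcyl r g)).map cfgQ with hμ1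
  set μ2 : Measure (Config d) := c • (cpl.Q.map cfgQ) with hμ2
  have hfin1 : IsFiniteMeasure μ1 := by
    constructor
    rw [hμ1, Measure.map_apply measurable_cfgQ MeasurableSet.univ]
    exact lt_of_le_of_lt (le_trans (Measure.restrict_apply_le _ _)
      (measure_mono (Set.subset_univ _))) (measure_lt_top _ _)
  have heq : μ1 = μ2 := by
    haveI := hfin1
    apply MeasureTheory.ext_of_generate_finite (VcylSet d) generateFrom_VcylSet isPiSystem_VcylSet
    · rintro S ⟨t, f, rfl⟩
      rw [hμ1, Measure.map_apply measurable_cfgQ (measurableSet_Vcyl t f),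
        Measure.restrict_apply (measurable_cfgQ (measurableSet_Vcyl t f)),
        Q_VZcyl cpl hq0 hq1 hr0 hr1 t f r g, hμ2]
      rw [Measure.smul_apply, Measure.map_apply measurable_cfgQ (measurableSet_Vcyl t f),
        Q_Vcyl cpl hq0 hq1 hr0 hr1 t f]
      rw [smul_eq_mul, mul_comm]
    · rw [hμ1, hμ2, Measure.map_apply measurable_cfgQ MeasurableSet.univ,
        Measure.restrict_apply (measurable_cfgQ MeasurableSet.univ)]
      rw [Set.preimage_univ, Set.univ_inter, Q_Zcyl cpl hq0 hq1 hr0 hr1 r g]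
      rw [Measure.smul_apply, Measure.map_apply measurable_cfgQ MeasurableSet.univ,
        Set.preimage_univ, measure_univ, smul_eq_mul, mul_one]
  have h1 : μ1 T = cpl.Q (cfgQ ⁻¹' T ∩ Zcyl r g) := by
    rw [hμ1, Measure.map_apply measurable_cfgQ hT,
      Measure.restrict_apply (measurable_cfgQ hT)]
  have h2 : μ2 T = cpl.Q (cfgQ ⁻¹' T) * c := by
    rw [hμ2, Measure.smul_apply, Measure.map_apply measurable_cfgQ hT, smul_eq_mul, mul_comm]
  rw [← h1, heq, h2]

end Prob4


section Hoeffding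
open Real Finset

/-- Hoeffding's lemma specialized to a Bernoulli variable. -/
lemma hoeff_mgf (μ : ℝ) (h0 : 0 ≤ μ) (h1 : μ ≤ 1) :
    ∀ c : ℝ, 0 ≤ c → 1 - μ + μ * Real.exp c ≤ Real.exp (c * μ + c ^ 2 / 8) := by
  set D : ℝ → ℝ := fun t => 1 - μ + μ * Real.exp t with hD
  have hDpos : ∀ t, 0 ≤ t → 0 < D t := by
    intro t ht
    have h1' : (1:ℝ) ≤ Real.exp t := Real.one_le_exp ht
    have h2 : 0 ≤ μ * (Real.exp t - 1) := mul_nonneg h0 (by linarith)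
    show (0:ℝ) < 1 - μ + μ * Real.exp t
    nlinarith
  have hDderiv : ∀ t, HasDerivAt D (μ * Real.exp t) t := by
    intro t
    exact ((Real.hasDerivAt_exp t).const_mul μ).const_add (1 - μ)
  set G : ℝ → ℝ := fun t => μ + t / 4 - μ * Real.exp t / D t with hG
  have hGderiv : ∀ t, 0 ≤ t →
      HasDerivAt G (1 / 4 - (μ * Real.exp t * D t - μ * Real.exp t * (μ * Real.exp t)) / (D t) ^ 2) t := by
    intro t ht
    have h1' : HasDerivAt (fun s : ℝ => μ + s / 4) (1/4) t := by
      simpa using ((hasDerivAt_id t).div_const 4).const_add μ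
    have h2' : HasDerivAt (fun s => μ * Real.exp s / D s)
        ((μ * Real.exp t * D t - μ * Real.exp t * (μ * Real.exp t)) / (D t) ^ 2) t :=
      ((Real.hasDerivAt_exp t).const_mul μ).div (hDderiv t) (ne_of_gt (hDpos t ht))
    exact h1'.sub h2'
  have hG'nonneg : ∀ t, 0 ≤ t →
      0 ≤ 1 / 4 - (μ * Real.exp t * D t - μ * Real.exp t * (μ * Real.exp t)) / (D t) ^ 2 := by
    intro t ht
    have hDt := hDpos t ht
    rw [sub_nonneg, div_le_iff₀ (by positivity)]
    have : μ * Real.exp t * D t - μ * Real.exp t * (μ * Real.exp t)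
        = (μ * Real.exp t) * (1 - μ) := by simp [hD]; ring
    rw [this]
    nlinarith [sq_nonneg ((1 - μ) - μ * Real.exp t), Real.exp_pos t]
  -- G is monotone on [0, ∞)
  have hGmono : MonotoneOn G (Set.Ici (0:ℝ)) := by
    apply monotoneOn_of_deriv_nonneg (convex_Ici 0)
    · exact fun x hx => (hGderiv x hx).continuousAt.continuousWithinAt
    · intro x hx
      rw [interior_Ici] at hx
      exact (hGderiv x (le_of_lt hx)).differentiableAt.differentiableWithinAt
    · intro x hx
      rw [interior_Ici] at hx
      rw [(hGderiv x (le_of_lt hx)).deriv]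
      exact hG'nonneg x (le_of_lt hx)
  have hG0 : G 0 = 0 := by simp [hG, hD]
  have hGnonneg : ∀ t, 0 ≤ t → 0 ≤ G t := by
    intro t ht
    have := hGmono (Set.self_mem_Ici) (Set.mem_Ici.2 ht) ht
    rwa [hG0] at this
  set F : ℝ → ℝ := fun t => t * μ + t ^ 2 / 8 - Real.log (D t) with hF
  have hFderiv : ∀ t, 0 ≤ t → HasDerivAt F (G t) t := by
    intro t ht
    have h1' : HasDerivAt (fun s : ℝ => s * μ + s ^ 2 / 8) (μ + 2 * t / 8) t := by
      have := ((hasDerivAt_pow 2 t).div_const 8)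
      have h := ((hasDerivAt_id t).mul_const μ).add
        (by simpa using this : HasDerivAt (fun s : ℝ => s ^ 2 / 8) (2 * t / 8) t)
      simp only [one_mul] at h
      exact h
    have h2' : HasDerivAt (fun s => Real.log (D s)) (μ * Real.exp t / D t) t :=
      (hDderiv t).log (ne_of_gt (hDpos t ht))
    have := h1'.sub h2'
    refine this.congr_deriv ?_
    show _ = μ + t / 4 - μ * Real.exp t / D t
    ring
  have hFmono : MonotoneOn F (Set.Ici (0:ℝ)) := by
    apply monotoneOn_of_deriv_nonneg (convex_Ici 0)
    · exact fun x hx => (hFderiv x hx).continuousAt.continuousWithinAt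
    · intro x hx
      rw [interior_Ici] at hx
      exact (hFderiv x (le_of_lt hx)).differentiableAt.differentiableWithinAt
    · intro x hx
      rw [interior_Ici] at hx
      rw [(hFderiv x (le_of_lt hx)).deriv]
      exact hGnonneg x (le_of_lt hx)
  have hF0 : F 0 = 0 := by simp [hF, hD]
  intro c hc
  have hFc : 0 ≤ F c := by
    have := hFmono (Set.self_mem_Ici) (Set.mem_Ici.2 hc) hc
    rwa [hF0] at this
  have hlog : Real.log (D c) ≤ c * μ + c ^ 2 / 8 := by
    simp only [hF] at hFc; linarith
  exact (Real.log_le_iff_le_exp (hDpos c hc)).1 hlog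

/-- Hoeffding tail bound for the binomial distribution. -/
lemma binom_tail (n : ℕ) (μ δ t : ℝ) (h0 : 0 ≤ μ) (h1 : μ ≤ 1) (hδ : 0 < δ)
    (ht : (n : ℝ) * (μ + δ) ≤ t) :
    ∑ j ∈ range (n + 1), (if t ≤ (j : ℝ) then (n.choose j : ℝ) * μ ^ j * (1 - μ) ^ (n - j) else 0)
      ≤ Real.exp (-2 * δ ^ 2 * n) := by
  set c : ℝ := 4 * δ with hc
  have hcpos : 0 < c := by positivity
  -- termwise bound
  have hterm : ∀ j ∈ range (n + 1),
      (if t ≤ (j : ℝ) then (n.choose j : ℝ) * μ ^ j * (1 - μ) ^ (n - j) else 0)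
        ≤ Real.exp (-(c * t)) * ((n.choose j : ℝ) * (μ * Real.exp c) ^ j * (1 - μ) ^ (n - j)) := by
    intro j hj
    have hμ1 : (0:ℝ) ≤ 1 - μ := by linarith
    have hnn : (0:ℝ) ≤ (n.choose j : ℝ) * μ ^ j * (1 - μ) ^ (n - j) :=
      mul_nonneg (mul_nonneg (Nat.cast_nonneg _) (pow_nonneg h0 _)) (pow_nonneg hμ1 _)
    by_cases h : t ≤ (j : ℝ)
    · rw [if_pos h]
      have h1' : (1:ℝ) ≤ Real.exp (c * j - c * t) := by
        apply Real.one_le_exp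
        have := mul_le_mul_of_nonneg_left h (le_of_lt hcpos)
        linarith
      calc (n.choose j : ℝ) * μ ^ j * (1 - μ) ^ (n - j)
          ≤ Real.exp (c * j - c * t) * ((n.choose j : ℝ) * μ ^ j * (1 - μ) ^ (n - j)) := by
            nlinarith
        _ = Real.exp (-(c * t)) * ((n.choose j : ℝ) * (μ * Real.exp c) ^ j * (1 - μ) ^ (n - j)) := by
            rw [show c * (j:ℝ) - c * t = -(c*t) + (j:ℝ) * c by ring, Real.exp_add,
              Real.exp_nat_mul, mul_pow]
            ring
    · rw [if_neg h]
      have hμ1 : (0:ℝ) ≤ 1 - μ := by linarith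
      exact mul_nonneg (le_of_lt (Real.exp_pos _))
        (mul_nonneg (mul_nonneg (Nat.cast_nonneg _) (pow_nonneg (by nlinarith [Real.exp_pos c] : (0:ℝ) ≤ μ * Real.exp c) _)) (pow_nonneg hμ1 _))
  have hsum := Finset.sum_le_sum hterm
  rw [← Finset.mul_sum] at hsum
  refine hsum.trans ?_
  have hbin : ∑ j ∈ range (n + 1), (n.choose j : ℝ) * (μ * Real.exp c) ^ j * (1 - μ) ^ (n - j)
      = (μ * Real.exp c + (1 - μ)) ^ n := by
    rw [add_pow]
    exact Finset.sum_congr rfl fun j hj => by ring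
  rw [hbin]
  have hD : (0:ℝ) ≤ μ * Real.exp c + (1 - μ) := by nlinarith [Real.exp_pos c, Real.one_le_exp (le_of_lt hcpos), mul_nonneg h0 (sub_nonneg.2 (Real.one_le_exp (le_of_lt hcpos)))]
  have hmgf : μ * Real.exp c + (1 - μ) ≤ Real.exp (c * μ + c ^ 2 / 8) := by
    have := hoeff_mgf μ h0 h1 c (le_of_lt hcpos)
    linarith
  calc Real.exp (-(c * t)) * (μ * Real.exp c + (1 - μ)) ^ n
      ≤ Real.exp (-(c * t)) * (Real.exp (c * μ + c ^ 2 / 8)) ^ n := by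
        apply mul_le_mul_of_nonneg_left _ (le_of_lt (Real.exp_pos _))
        exact pow_le_pow_left₀ hD hmgf n
    _ = Real.exp (-(c * t) + n * (c * μ + c ^ 2 / 8)) := by
        rw [← Real.exp_nat_mul, ← Real.exp_add]
    _ ≤ Real.exp (-2 * δ ^ 2 * n) := by
        apply Real.exp_le_exp.2
        have h2 : -(c * t) ≤ -(c * ((n:ℝ) * (μ + δ))) := by
          apply neg_le_neg
          exact mul_le_mul_of_nonneg_left ht (le_of_lt hcpos)
        calc -(c * t) + n * (c * μ + c ^ 2 / 8)
            ≤ -(c * ((n:ℝ) * (μ + δ))) + n * (c * μ + c ^ 2 / 8) := by linarith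
          _ = -2 * δ ^ 2 * n := by rw [hc]; ring
end Hoeffding

section Tail
variable {d : ℕ} {p q : ℝ}

open Finset in
lemma Q_tail_le (cpl : CouplingMeasure d p q) (hq0 : 0 ≤ q) (hq1 : q ≤ 1)
    (hr0 : 0 ≤ p / q) (hr1 : p / q ≤ 1) {T : Set (Config d)} (hT : MeasurableSet T)
    (E : Finset (Edge d)) (τ δ : ℝ) (hδ : 0 < δ)
    (hτ : (E.card : ℝ) * ((1 - p / q) + δ) ≤ τ) :
    cpl.Q (cfgQ ⁻¹' T ∩ {u : CConfig d | τ ≤ ((E.filter fun e => (u e).2 = false).card : ℝ)})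
      ≤ cpl.Q (cfgQ ⁻¹' T) * ENNReal.ofReal (Real.exp (-2 * δ ^ 2 * E.card)) := by
  classical
  set m := E.card with hm
  set μ' : ℝ := 1 - p / q with hμ'
  have hμ'0 : 0 ≤ μ' := by rw [hμ']; linarith
  have hμ'1 : μ' ≤ 1 := by rw [hμ']; linarith
  set pat : Finset (Edge d) → Edge d → Bool := fun ss e => if e ∈ ss then false else true
    with hpat
  set P : Finset (Finset (Edge d)) := E.powerset.filter (fun ss => τ ≤ (ss.card : ℝ)) with hP
  have hdecomp : {u : CConfig d | τ ≤ ((E.filter fun e => (u e).2 = false).card : ℝ)}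
      = ⋃ ss ∈ P, Zcyl E (pat ss) := by
    ext u
    simp only [Set.mem_setOf_eq, Set.mem_iUnion]
    constructor
    · intro hu
      refine ⟨E.filter (fun e => (u e).2 = false), ?_, ?_⟩
      · rw [hP, Finset.mem_filter, Finset.mem_powerset]
        exact ⟨Finset.filter_subset _ _, hu⟩
      · intro e he
        by_cases hess : e ∈ E.filter (fun e => (u e).2 = false)
        · rw [hpat]
          simp only [if_pos hess]
          exact (Finset.mem_filter.1 hess).2
        · rw [hpat]
          simp only [if_neg hess]
          have : ¬ ((u e).2 = false) := fun hc => hess (Finset.mem_filter.2 ⟨he, hc⟩)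
          simpa using this
    · rintro ⟨ss, hssP, hss⟩
      rw [hP, Finset.mem_filter, Finset.mem_powerset] at hssP
      obtain ⟨hsub, hcard⟩ := hssP
      have hfeq : E.filter (fun e => (u e).2 = false) = ss := by
        ext e
        rw [Finset.mem_filter]
        constructor
        · rintro ⟨he, hval⟩
          by_contra hess
          have := hss e he
          rw [hpat] at this
          simp only [if_neg hess] at this
          rw [hval] at this
          exact Bool.false_ne_true this
        · intro hess
          refine ⟨hsub hess, ?_⟩
          have := hss e (hsub hess)
          rw [hpat] at this
          simpa only [if_pos hess] using this
      rw [hfeq]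
      exact hcard
  rw [hdecomp, Set.inter_iUnion₂]
  have hdisjoint : Set.PairwiseDisjoint (↑P) (fun ss => cfgQ ⁻¹' T ∩ Zcyl E (pat ss)) := by
    intro ss1 h1 ss2 h2 hne
    rw [Function.onFun, Set.disjoint_left]
    rintro u ⟨-, hu1⟩ ⟨-, hu2⟩
    rw [hP, Finset.mem_coe, Finset.mem_filter, Finset.mem_powerset] at h1 h2
    apply hne
    ext e
    by_cases heE : e ∈ E
    · have e1 := hu1 e heE
      have e2 := hu2 e heE
      rw [e1] at e2
      rw [hpat] at e2
      constructor
      · intro hess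
        by_contra hess2
        simp only [if_pos hess, if_neg hess2] at e2
        exact Bool.false_ne_true e2
      · intro hess
        by_contra hess2
        simp only [if_neg hess2, if_pos hess] at e2
        exact Bool.false_ne_true e2.symm
    · constructor
      · intro hess; exact absurd (h1.1 hess) heE
      · intro hess; exact absurd (h2.1 hess) heE
  rw [measure_biUnion_finset hdisjoint
    (fun ss _ => (measurable_cfgQ hT).inter (measurableSet_Zcyl E (pat ss)))]
  have hterm : ∀ ss ∈ P, cpl.Q (cfgQ ⁻¹' T ∩ Zcyl E (pat ss))
      = cpl.Q (cfgQ ⁻¹' T) *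
        (ENNReal.ofReal μ' ^ ss.card * ENNReal.ofReal (p / q) ^ (m - ss.card)) := by
    intro ss hss
    rw [hP, Finset.mem_filter, Finset.mem_powerset] at hss
    rw [Q_indep cpl hq0 hq1 hr0 hr1 E (pat ss) hT]
    congr 1
    rw [← Finset.prod_sdiff hss.1]
    have h1 : ∀ e ∈ ss, wZ p q (pat ss e) = ENNReal.ofReal μ' := by
      intro e he
      rw [hpat]
      simp only [if_pos he]
      rw [wZ, hμ']
      norm_num
    have h2 : ∀ e ∈ E \ ss, wZ p q (pat ss e) = ENNReal.ofReal (p / q) := by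
      intro e he
      rw [hpat]
      simp only [if_neg (Finset.mem_sdiff.1 he).2]
      rw [wZ]
      norm_num
    rw [Finset.prod_congr rfl h1, Finset.prod_congr rfl h2, Finset.prod_const,
      Finset.prod_const, Finset.card_sdiff_of_subset hss.1]
    ring
  rw [Finset.sum_congr rfl hterm, ← Finset.mul_sum]
  apply mul_le_mul_right
  have hpq' : 1 - μ' = p / q := by rw [hμ']; ring
  have hsumP : ∑ ss ∈ P, (ENNReal.ofReal μ' ^ ss.card * ENNReal.ofReal (p / q) ^ (m - ss.card))
      = ∑ ss ∈ E.powerset, (if τ ≤ (ss.card : ℝ) then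
          ENNReal.ofReal μ' ^ ss.card * ENNReal.ofReal (p / q) ^ (m - ss.card) else 0) := by
    rw [hP, Finset.sum_filter]
  rw [hsumP, Finset.sum_powerset_apply_card (fun j => if τ ≤ (j : ℝ) then
    ENNReal.ofReal μ' ^ j * ENNReal.ofReal (p / q) ^ (m - j) else 0)]
  have hterm2 : ∀ j ∈ Finset.range (m + 1),
      m.choose j • (if τ ≤ (j : ℝ) then
          ENNReal.ofReal μ' ^ j * ENNReal.ofReal (p / q) ^ (m - j) else 0)
        = ENNReal.ofReal (if τ ≤ (j : ℝ) then
            (m.choose j : ℝ) * μ' ^ j * (1 - μ') ^ (m - j) else 0) := by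
    intro j _
    split_ifs with hj
    · rw [hpq', nsmul_eq_mul, ← ENNReal.ofReal_pow hμ'0,
        ← ENNReal.ofReal_pow hr0,
        ← ENNReal.ofReal_mul (pow_nonneg hμ'0 _), ← ENNReal.ofReal_natCast (m.choose j),
        ← ENNReal.ofReal_mul (Nat.cast_nonneg _)]
      congr 1
      ring
    · rw [smul_zero, ENNReal.ofReal_zero]
  rw [Finset.sum_congr rfl hterm2, ← ENNReal.ofReal_sum_of_nonneg (fun j _ => by
    split_ifs with hj
    · exact mul_nonneg (mul_nonneg (Nat.cast_nonneg _) (pow_nonneg hμ'0 _))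
        (pow_nonneg (by linarith) _)
    · exact le_refl 0)]
  exact ENNReal.ofReal_le_ofReal (binom_tail m μ' δ τ hμ'0 hμ'1 hδ hτ)

end Tail

section MainProof
variable {d : ℕ} {p q : ℝ}

open Finset in
lemma per_part (cpl : CouplingMeasure d p q) (hq0 : 0 ≤ q) (hq1 : q ≤ 1) (hqpos : 0 < q)
    (hr0 : 0 ≤ p / q) (hr1 : p / q ≤ 1) (x : V d) (δ : ℝ) (hδ : 0 < δ)
    (n : ℕ) (S : Finset (Fin (n + 1) → V d)) :
    cpl.Q (cfgQ ⁻¹' partEvent (0 : V d) x n S ∩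
        {u : CConfig d | ((geod (cfgQ u) 0 x).1 : ℝ) * ((q - p) / q + δ) ≤
          ((closedEdges (cfgP u) (geod (cfgQ u) 0 x).1 (geod (cfgQ u) 0 x).2).ncard : ℝ)})
      ≤ cpl.Q (cfgQ ⁻¹' partEvent (0 : V d) x n S) *
          ENNReal.ofReal (Real.exp (-2 * δ ^ 2 * norm1 x)) := by
  classical
  rcases Set.eq_empty_or_nonempty (partEvent (0 : V d) x n S) with hemp | hne
  · rw [hemp]
    simp
  obtain ⟨ω₀, hω₀⟩ := hne
  have hconn₀ : Connected ω₀ 0 x := partEvent_connected hω₀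
  obtain ⟨hop₀, h0₀, hend₀, hchem₀⟩ := geod_spec ω₀ 0 x hconn₀
  set n₀ := (geod ω₀ 0 x).1 with hn₀
  set f₀ := (geod ω₀ 0 x).2 with hf₀
  have hn₀n : n₀ = n := by
    have h := hω₀.1
    rw [← hchem₀] at h
    exact_mod_cast h
  have hedge : ∀ i, i < n₀ → sym2dist1 s(f₀ i, f₀ (i + 1)) = 1 := by
    intro i hi
    obtain ⟨h1, -⟩ := hop₀ i hi
    exact h1
  set φ : {i // i ∈ Finset.range n₀} → Edge d :=
    fun i => ⟨s(f₀ i.1, f₀ (i.1 + 1)), hedge i.1 (Finset.mem_range.1 i.2)⟩ with hφ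
  set E0 : Finset (Edge d) := (Finset.range n₀).attach.image φ with hE0
  have hsa := geod_selfavoid ω₀ 0 x hconn₀
  have hcard : E0.card = n₀ := by
    rw [hE0, Finset.card_image_of_injective _ ?_, Finset.card_attach, Finset.card_range]
    intro a b hab
    rw [hφ] at hab
    have hab' : s(f₀ a.1, f₀ (a.1 + 1)) = s(f₀ b.1, f₀ (b.1 + 1)) :=
      congrArg Subtype.val hab
    have ha1 : a.1 < n₀ := Finset.mem_range.1 a.2
    have hb1 : b.1 < n₀ := Finset.mem_range.1 b.2
    rw [Sym2.eq_iff] at hab'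
    rcases hab' with ⟨h1, _⟩ | ⟨h1, h2⟩
    · exact Subtype.ext (hsa a.1 (by omega) b.1 (by omega) h1)
    · have e1 := hsa a.1 (by omega) (b.1 + 1) (by omega) h1
      have e2 := hsa (a.1 + 1) (by omega) b.1 (by omega) h2
      omega
  have hdistx : dist1 (0 : V d) x ≤ n₀ := by
    have := isOpenPath_dist1 hop₀ n₀ le_rfl
    rwa [h0₀, hend₀] at this
  set τ : ℝ := (n : ℝ) * ((q - p) / q + δ) with hτ
  have hqp : (q - p) / q = 1 - p / q := by
    field_simp
  -- inclusion into the Z-tail event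
  have hsub : cfgQ ⁻¹' partEvent (0 : V d) x n S ∩
      {u : CConfig d | ((geod (cfgQ u) 0 x).1 : ℝ) * ((q - p) / q + δ) ≤
        ((closedEdges (cfgP u) (geod (cfgQ u) 0 x).1 (geod (cfgQ u) 0 x).2).ncard : ℝ)}
      ⊆ cfgQ ⁻¹' partEvent (0 : V d) x n S ∩
        {u : CConfig d | τ ≤ ((E0.filter fun e => (u e).2 = false).card : ℝ)} := by
    rintro u ⟨hu1, hu2⟩
    refine ⟨hu1, ?_⟩
    have hgeq : geod (cfgQ u) 0 x = geod ω₀ 0 x := partEvent_geod_const hu1 hω₀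
    rw [Set.mem_setOf_eq, hgeq, ← hn₀, ← hf₀] at hu2
    have hconnu : Connected (cfgQ u) 0 x := partEvent_connected hu1
    have hopu : IsOpenPath (cfgQ u) n₀ f₀ := by
      have := (geod_spec (cfgQ u) 0 x hconnu).1
      rwa [hgeq, ← hn₀, ← hf₀] at this
    -- closed edges inject into the filtered edge set
    have hclosub : closedEdges (cfgP u) n₀ f₀ ⊆
        ↑((E0.filter (fun ed => ¬ openE (cfgP u) ed.1)).image Subtype.val) := by
      rintro e ⟨⟨i, hi, rfl⟩, hcl⟩
      erw [Finset.coe_image, Set.mem_image]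
      refine ⟨φ ⟨i, Finset.mem_range.2 hi⟩, ?_, rfl⟩
      refine Finset.mem_coe.2 (Finset.mem_filter.2 ?_)
      constructor
      · rw [hE0]
        exact Finset.mem_image_of_mem φ (Finset.mem_attach _ _)
      · exact hcl
    have hncard : (closedEdges (cfgP u) n₀ f₀).ncard
        ≤ ((E0.filter (fun ed => ¬ openE (cfgP u) ed.1)).image Subtype.val).card := by
      rw [← Set.ncard_coe_finset]
      exact Set.ncard_le_ncard hclosub (Finset.finite_toSet _)
    have himage : ((E0.filter (fun ed => ¬ openE (cfgP u) ed.1)).image Subtype.val).card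
        ≤ (E0.filter (fun ed => ¬ openE (cfgP u) ed.1)).card := Finset.card_image_le
    have hfilsub : E0.filter (fun ed => ¬ openE (cfgP u) ed.1)
        ⊆ E0.filter (fun ed => (u ed).2 = false) := by
      intro ed hed
      rw [Finset.mem_filter] at hed ⊢
      obtain ⟨hedE, hedcl⟩ := hed
      refine ⟨hedE, ?_⟩
      -- the edge is q-open
      rw [hE0, Finset.mem_image] at hedE
      obtain ⟨i, -, rfl⟩ := hedE
      have hiop : openE (cfgQ u) s(f₀ i.1, f₀ (i.1 + 1)) :=
        hopu i.1 (Finset.mem_range.1 i.2)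
      obtain ⟨hd, hvq⟩ := hiop
      have hv1 : (u (φ i)).1 = true := hvq
      by_contra hz
      have hz' : (u (φ i)).2 = true := by
        cases hval : (u (φ i)).2 with
        | true => rfl
        | false => exact absurd hval hz
      apply hedcl
      refine ⟨hedge i.1 (Finset.mem_range.1 i.2), ?_⟩
      show ((u (φ i)).1 && (u (φ i)).2) = true
      rw [hv1, hz']
      rfl
    have hcards : ((E0.filter (fun ed => ¬ openE (cfgP u) ed.1)).card : ℝ)
        ≤ ((E0.filter (fun ed => (u ed).2 = false)).card : ℝ) := by
      exact_mod_cast Finset.card_le_card hfilsub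
    rw [Set.mem_setOf_eq, hτ, ← hn₀n]
    calc (n₀ : ℝ) * ((q - p) / q + δ)
        ≤ ((closedEdges (cfgP u) n₀ f₀).ncard : ℝ) := hu2
      _ ≤ ((E0.filter (fun ed => ¬ openE (cfgP u) ed.1)).card : ℝ) := by
          exact_mod_cast le_trans hncard himage
      _ ≤ _ := hcards
  refine le_trans (measure_mono hsub) ?_
  have htail := Q_tail_le cpl hq0 hq1 hr0 hr1 (measurableSet_partEvent (0 : V d) x n S)
    E0 τ δ hδ ?_
  · refine le_trans htail ?_
    apply mul_le_mul_right
    apply ENNReal.ofReal_le_ofReal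
    apply Real.exp_le_exp.2
    have hn1 : norm1 x ≤ (E0.card : ℝ) := by
      rw [hcard, norm1]
      have : dist1 x 0 = dist1 (0 : V d) x := dist1_symm x 0
      rw [this]
      exact_mod_cast hdistx
    nlinarith [sq_nonneg δ]
  · rw [hcard, hn₀n, hτ, hqp]

theorem statement_13' (dd : ℕ) (hd : 2 ≤ dd) (F : BernoulliFamily dd)
    (p q : ℝ) (hp : pc F < p) (hpq : p ≤ q) (hq : q ≤ 1)
    (cpl : CouplingMeasure dd p q) (x : V dd) (δ : ℝ) (hδ : 0 < δ) :
    cpl.Q {u : CConfig dd |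
        InInfiniteCluster (cfgQ u) 0 ∧ InInfiniteCluster (cfgQ u) x ∧
        Connected (cfgQ u) 0 x ∧
        ((geod (cfgQ u) 0 x).1 : ℝ) * ((q - p) / q + δ) ≤
          ((closedEdges (cfgP u) (geod (cfgQ u) 0 x).1 (geod (cfgQ u) 0 x).2).ncard : ℝ)}
      ≤ ENNReal.ofReal (Real.exp (-2 * δ ^ 2 * norm1 x)) := by
  classical
  haveI := cpl.prob
  have hpc0 : 0 ≤ pc F := Real.sInf_nonneg (fun r hr => hr.1)
  have hp0 : 0 < p := lt_of_le_of_lt hpc0 hp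
  have hqpos : 0 < q := lt_of_lt_of_le hp0 hpq
  have hq0 : 0 ≤ q := le_of_lt hqpos
  have hr0 : 0 ≤ p / q := div_nonneg (le_of_lt hp0) hq0
  have hr1 : p / q ≤ 1 := (div_le_one hqpos).2 hpq
  set B : ℝ≥0∞ := ENNReal.ofReal (Real.exp (-2 * δ ^ 2 * norm1 x)) with hB
  set R : Set (CConfig dd) := {u : CConfig dd |
      ((geod (cfgQ u) 0 x).1 : ℝ) * ((q - p) / q + δ) ≤
        ((closedEdges (cfgP u) (geod (cfgQ u) 0 x).1 (geod (cfgQ u) 0 x).2).ncard : ℝ)}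
    with hR
  set D : (Σ n : ℕ, Finset (Fin (n + 1) → V dd)) → Set (CConfig dd) :=
    fun σ => cfgQ ⁻¹' partEvent (0 : V dd) x σ.1 σ.2 with hD
  have hcover : {u : CConfig dd |
      InInfiniteCluster (cfgQ u) 0 ∧ InInfiniteCluster (cfgQ u) x ∧
      Connected (cfgQ u) 0 x ∧
      ((geod (cfgQ u) 0 x).1 : ℝ) * ((q - p) / q + δ) ≤
        ((closedEdges (cfgP u) (geod (cfgQ u) 0 x).1 (geod (cfgQ u) 0 x).2).ncard : ℝ)}
      ⊆ ⋃ σ : (Σ n : ℕ, Finset (Fin (n + 1) → V dd)), (D σ ∩ R) := by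
    rintro u ⟨-, -, h3, h4⟩
    obtain ⟨n, S, hmem⟩ := partEvent_cover h3
    exact Set.mem_iUnion.2 ⟨⟨n, S⟩, hmem, h4⟩
  have hdisj : Pairwise (Function.onFun Disjoint D) := by
    intro σ1 σ2 hne
    rw [Function.onFun, Set.disjoint_left]
    intro u hu1 hu2
    apply hne
    rw [hD] at hu1 hu2
    have := partEvent_disjoint (0 : V dd) x σ1.1 σ2.1 σ1.2 σ2.2 hu1 hu2
    by_contra hc
    apply this
    intro hcc
    apply hc
    obtain ⟨h1, h2⟩ := hcc
    exact Sigma.ext h1 h2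
  have hsum1 : ∑' σ : (Σ n : ℕ, Finset (Fin (n + 1) → V dd)), cpl.Q (D σ) ≤ 1 := by
    rw [← measure_iUnion hdisj
      (fun σ => measurable_cfgQ (measurableSet_partEvent (0 : V dd) x σ.1 σ.2))]
    exact prob_le_one
  calc cpl.Q _ ≤ cpl.Q (⋃ σ : (Σ n : ℕ, Finset (Fin (n + 1) → V dd)), (D σ ∩ R)) :=
        measure_mono hcover
    _ ≤ ∑' σ : (Σ n : ℕ, Finset (Fin (n + 1) → V dd)), cpl.Q (D σ ∩ R) := measure_iUnion_le _
    _ ≤ ∑' σ : (Σ n : ℕ, Finset (Fin (n + 1) → V dd)), cpl.Q (D σ) * B := by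
        apply ENNReal.tsum_le_tsum
        intro σ
        exact per_part cpl hq0 hq hqpos hr0 hr1 x δ hδ σ.1 σ.2
    _ = (∑' σ : (Σ n : ℕ, Finset (Fin (n + 1) → V dd)), cpl.Q (D σ)) * B :=
        ENNReal.tsum_mul_right
    _ ≤ 1 * B := mul_le_mul_left hsum1 _
    _ = B := one_mul _

end MainProof


/-- **Chernoff bound for the number of `p`-closed edges of a geodesic.**
Under the two-stage coupling, if `γ` is a deterministically chosen geodesic from `0` to
`x` in `𝒞_q` and `γ_c` is its set of `p`-closed edges, then for every `δ > 0`,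
`ℙ(|γ_c| ≥ |γ|((q-p)/q + δ)) ≤ exp(-2δ²‖x‖₁)`. -/
theorem statement_13 (d : ℕ) (hd : 2 ≤ d) (F : BernoulliFamily d)
    (p q : ℝ) (hp : pc F < p) (hpq : p ≤ q) (hq : q ≤ 1)
    (cpl : CouplingMeasure d p q) (x : V d) (δ : ℝ) (hδ : 0 < δ) :
    cpl.Q {u : CConfig d |
        InInfiniteCluster (cfgQ u) 0 ∧ InInfiniteCluster (cfgQ u) x ∧
        Connected (cfgQ u) 0 x ∧
        ((geod (cfgQ u) 0 x).1 : ℝ) * ((q - p) / q + δ) ≤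
          ((closedEdges (cfgP u) (geod (cfgQ u) 0 x).1 (geod (cfgQ u) 0 x).2).ncard : ℝ)}
      ≤ ENNReal.ofReal (Real.exp (-2 * δ ^ 2 * norm1 x)) := by
  exact statement_13' d hd F p q hp hpq hq cpl x δ hδ

end Perco
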